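/- arXiv:0810.2865 — 11 statements merged into one kernel-verified Lean document; each statement's English description precedes it below -/
import Mathlib

section
/- For any tax-based mechanism t, the mechanism t^BCGC obtained by the BCGC transformation is feasible: for every type vector θ, the sum over all players i of t_i^BCGC(θ) is at most 0. -/
/-- Any mechanism obtained by the BCGC transformation is feasible:
given a tax function `t`, total `T θ = ∑ i, t θ i`, and for each player `i` a
function `S i θ` depending only on `θ_{-i}` which is the maximum of
`T (θ'_i, θ_{-i})` over `θ'_i ∈ Θ i` (it is an upper bound and is attained),
the transformed taxes `t^BCGC i θ = t θ i − S i θ / n` satisfy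
`∑ i, t^BCGC i θ ≤ 0` for every type vector `θ`. -/
theorem bcgc_feasible
    {n : ℕ} (hn : 2 ≤ n) (Θ : Fin n → Type*)
    (t : (∀ i, Θ i) → Fin n → ℝ)
    (T : (∀ i, Θ i) → ℝ)
    (hT : ∀ θ, T θ = ∑ i, t θ i)
    (S : Fin n → (∀ i, Θ i) → ℝ)
    -- S i θ depends only on θ_{-i}
    (hSindep : ∀ i : Fin n, ∀ θ : ∀ j, Θ j, ∀ θi' : Θ i,
      S i (Function.update θ i θi') = S i θ)
    -- S i θ is the maximum over θ'_i of T (θ'_i, θ_{-i})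
    (hSmax : ∀ i : Fin n, ∀ θ : ∀ j, Θ j,
      IsGreatest {x : ℝ | ∃ θi' : Θ i, x = T (Function.update θ i θi')} (S i θ))
    (tBCGC : (∀ i, Θ i) → Fin n → ℝ)
    (htBCGC : ∀ θ i, tBCGC θ i = t θ i - S i θ / n) :
    ∀ θ : ∀ i, Θ i, ∑ i, tBCGC θ i ≤ 0 := by
  intro θ
  have hS : ∀ i : Fin n, T θ ≤ S i θ := by
    intro i
    apply (hSmax i θ).2
    exact ⟨θ i, by rw [Function.update_eq_self]⟩
  have hn0 : (0:ℝ) < n := by positivity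
  calc ∑ i, tBCGC θ i = ∑ i, (t θ i - S i θ / n) := by
        simp [htBCGC]
    _ = T θ - (∑ i, S i θ) / n := by
        rw [Finset.sum_sub_distrib, ← Finset.sum_div, hT]
    _ ≤ T θ - (∑ _i : Fin n, T θ) / n := by
        gcongr with i _
        exact hS i
    _ = 0 := by
        field_simp
        rw [Finset.sum_const, Finset.card_univ, Fintype.card_fin, nsmul_eq_mul]; ring
end

section
/- Every Groves mechanism is efficient and strategy-proof: the decision function maximizes the sum of players' valuations, and for every player i, every true type θ_i, every report θ'_i, and every profile θ_{-i} of other reports, the final utility of player i from reporting θ_i is at least that from reporting θ'_i. -/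
/-- Groves Theorem: every Groves mechanism is efficient and
strategy-proof.  The decision function `f` maximizes the total valuation, the
tax of player `i` is `t i θ = ∑_{j ≠ i} v j (f θ) (θ j) + h i θ` where `h i`
depends only on `θ_{-i}`, and the final utility of player `i` with true type
`θ i` at reported profile `θ'` is `v i (f θ') (θ i) + t i θ'`.  Conclusion:
`f` is efficient, and truthful reporting yields at least the utility of any
misreport `θi'`. -/
theorem groves_efficient_and_strategyproof
    {n : ℕ} (hn : 2 ≤ n) (D : Type*) (Θ : Fin n → Type*)
    (v : ∀ i : Fin n, D → Θ i → ℝ)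
    (f : (∀ i, Θ i) → D)
    (hf : ∀ θ : ∀ i, Θ i, ∀ d : D,
      ∑ i, v i d (θ i) ≤ ∑ i, v i (f θ) (θ i))
    (h : Fin n → (∀ i, Θ i) → ℝ)
    (hindep : ∀ i : Fin n, ∀ θ : ∀ j, Θ j, ∀ θi' : Θ i,
      h i (Function.update θ i θi') = h i θ)
    (t : (∀ i, Θ i) → Fin n → ℝ)
    (ht : ∀ θ i, t θ i = (∑ j ∈ Finset.univ.erase i, v j (f θ) (θ j)) + h i θ) :
    -- efficiency
    (∀ θ : ∀ i, Θ i, ∀ d : D, ∑ i, v i d (θ i) ≤ ∑ i, v i (f θ) (θ i)) ∧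
    -- strategy-proofness
    (∀ i : Fin n, ∀ θ : ∀ j, Θ j, ∀ θi' : Θ i,
      v i (f (Function.update θ i θi')) (θ i) + t (Function.update θ i θi') i ≤
        v i (f θ) (θ i) + t θ i) := by
  refine ⟨hf, fun i θ θi' => ?_⟩
  set θ' := Function.update θ i θi' with hθ'
  have hsame : ∀ j ∈ Finset.univ.erase i, v j (f θ') (θ' j) = v j (f θ') (θ j) := by
    intro j hj
    rw [hθ', Function.update_of_ne (Finset.mem_erase.mp hj).1]
  have key : v i (f θ') (θ i) + ∑ j ∈ Finset.univ.erase i, v j (f θ') (θ j)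
      = ∑ j, v j (f θ') (θ j) := by
    rw [← Finset.add_sum_erase _ _ (Finset.mem_univ i)]
  have key2 : v i (f θ) (θ i) + ∑ j ∈ Finset.univ.erase i, v j (f θ) (θ j)
      = ∑ j, v j (f θ) (θ j) := by
    rw [← Finset.add_sum_erase _ _ (Finset.mem_univ i)]
  rw [ht, ht, hindep i θ θi', Finset.sum_congr rfl hsame]
  rw [← add_assoc, ← add_assoc, key, key2]
  exact add_le_add_left (hf θ (f θ')) _
end

section
/- Let h = (h_1, ..., h_n) be a Groves mechanism where all type sets equal Θ_0, and define the symmetrized function h'(x) := (1/n!) Σ_{π ∈ Π(n−1)} Σ_{j=1}^n h_j(x^π) for x ∈ Θ_0^{n−1}, where x^π permutes coordinates by π. Suppose the optimal social welfare G(θ) := Σ_j v_j(f(θ), θ_j) is invariant under permutations of θ. Then: (i) if the Groves mechanism h is feasible, so is the anonymous Groves mechanism determined by h'; (ii) if an anonymous Groves mechanism h^0 is welfare dominated by h, then h^0 is welfare dominated by h'. -/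
/-- Extend a permutation of `Fin k` to a permutation of `Fin (k+1)` sending `j` to `i`
and `j.succAbove m` to `i.succAbove (π m)`. -/
def permExtAux {k : ℕ} (j i : Fin (k + 1)) (π : Equiv.Perm (Fin k)) :
    Equiv.Perm (Fin (k + 1)) :=
  (finSuccEquiv' j).trans ((Equiv.optionCongr π).trans (finSuccEquiv' i).symm)

lemma permExtAux_succAbove {k : ℕ} (j i : Fin (k + 1)) (π : Equiv.Perm (Fin k)) (m : Fin k) :
    permExtAux j i π (j.succAbove m) = i.succAbove (π m) := by
  simp [permExtAux, finSuccEquiv'_succAbove, finSuccEquiv'_symm_some]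

lemma permExtAux_apply {k : ℕ} (j i : Fin (k + 1)) (π : Equiv.Perm (Fin k)) :
    permExtAux j i π j = i := by
  simp [permExtAux, finSuccEquiv'_at, finSuccEquiv'_symm_none]

lemma permExtAux_bijective {k : ℕ} (j : Fin (k + 1)) :
    Function.Bijective (fun p : Fin (k + 1) × Equiv.Perm (Fin k) => permExtAux j p.1 p.2) := by
  rw [Fintype.bijective_iff_injective_and_card]
  constructor
  · rintro ⟨i, π⟩ ⟨i', π'⟩ hp
    simp only at hp
    have hi : i = i' := by
      rw [← permExtAux_apply j i π, ← permExtAux_apply j i' π', hp]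
    subst hi
    have hπ : π = π' := Equiv.ext fun m => by
      have := congrArg (fun σ : Equiv.Perm (Fin (k+1)) => σ (j.succAbove m)) hp
      simp only [permExtAux_succAbove] at this
      exact Fin.succAbove_right_injective this
    simp [hπ]
  · simp [Fintype.card_perm, Nat.factorial_succ]

lemma sum_perm_remove {k : ℕ} {α : Type*} (F : (Fin k → α) → ℝ)
    (θ : Fin (k + 1) → α) (j : Fin (k + 1)) :
    ∑ σ : Equiv.Perm (Fin (k + 1)), F (θ ∘ σ ∘ j.succAbove)
      = ∑ i : Fin (k + 1), ∑ π : Equiv.Perm (Fin k), F (θ ∘ i.succAbove ∘ π) := by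
  rw [← Fintype.sum_prod_type (f := fun p : Fin (k + 1) × Equiv.Perm (Fin k) => F (θ ∘ p.1.succAbove ∘ p.2))]
  refine (Fintype.sum_bijective _ (permExtAux_bijective j)
    (fun p : Fin (k + 1) × Equiv.Perm (Fin k) => F (θ ∘ p.1.succAbove ∘ p.2))
    (fun σ => F (θ ∘ σ ∘ j.succAbove)) ?_).symm
  rintro ⟨i, π⟩
  show F (θ ∘ i.succAbove ∘ π) = F (θ ∘ (permExtAux j i π) ∘ j.succAbove)
  congr 1
  funext m
  simp [permExtAux_succAbove]

lemma comp_succAbove_perm {k : ℕ} {α : Type*} (θ : Fin (k + 1) → α)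
    (σ : Equiv.Perm (Fin (k + 1))) (i : Fin (k + 1)) :
    ∃ τ : Equiv.Perm (Fin k), (θ ∘ σ) ∘ i.succAbove = (θ ∘ (σ i).succAbove) ∘ τ := by
  set e : Option (Fin k) ≃ Option (Fin k) :=
    ((finSuccEquiv' i).symm.trans σ).trans (finSuccEquiv' (σ i)) with he
  refine ⟨Equiv.removeNone e, ?_⟩
  funext m
  have hne : σ (i.succAbove m) ≠ σ i := σ.injective.ne (Fin.succAbove_ne i m)
  have hsome : ∃ x', e (some m) = some x' := by
    rcases ho : e (some m) with _ | x'
    · exfalso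
      apply hne
      have : σ (i.succAbove m) = (finSuccEquiv' (σ i)).symm none := by
        rw [← ho]
        simp [he, finSuccEquiv'_symm_some]
      rwa [finSuccEquiv'_symm_none] at this
    · exact ⟨x', rfl⟩
  have h1 : some (Equiv.removeNone e m) = e (some m) := Equiv.removeNone_some e hsome
  have h2 : e (some m) = finSuccEquiv' (σ i) (σ (i.succAbove m)) := by
    simp [he, finSuccEquiv'_symm_some]
  have h3 : (finSuccEquiv' (σ i)).symm (some (Equiv.removeNone e m)) = σ (i.succAbove m) := by
    rw [h1, h2, Equiv.symm_apply_apply]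
  simp only [Function.comp_apply]
  rw [← h3, finSuccEquiv'_symm_some]


/-- symmetrization lemma for Groves mechanisms.  There are
`k + 1 ≥ 2` players with a common type space `Θ0` and a common valuation
`v : D → Θ0 → ℝ`.  A Groves mechanism is given by `h : Fin (k+1) → (Fin k → Θ0) → ℝ`,
with taxes `t i θ = (G θ − v (f θ) (θ i)) + h i (θ_{-i})` where
`G θ = ∑ j, v (f θ) (θ j)` and `θ_{-i} = θ ∘ i.succAbove`.  Define the
symmetrization `h' x = (1/(k+1)!) ∑_{π ∈ Perm (Fin k)} ∑_j h j (x ∘ π)`.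
Assume `G` is permutation invariant.  Then (i) if `h` is feasible so is the
anonymous mechanism determined by `h'`; (ii) if an anonymous Groves mechanism
`h0` is welfare dominated by `h`, then it is welfare dominated by `h'`. -/
theorem symmetrization_lemma
    {k : ℕ} (hk : 1 ≤ k) (D : Type*) (Θ0 : Type*)
    (v : D → Θ0 → ℝ)
    (f : (Fin (k + 1) → Θ0) → D)
    (hf : ∀ θ : Fin (k + 1) → Θ0, ∀ d : D,
      ∑ i, v d (θ i) ≤ ∑ i, v (f θ) (θ i))
    (G : (Fin (k + 1) → Θ0) → ℝ)
    (hG : ∀ θ, G θ = ∑ i, v (f θ) (θ i))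
    (hGinv : ∀ θ : Fin (k + 1) → Θ0, ∀ π : Equiv.Perm (Fin (k + 1)),
      G (θ ∘ π) = G θ)
    (h : Fin (k + 1) → (Fin k → Θ0) → ℝ)
    (t : (Fin (k + 1) → Θ0) → Fin (k + 1) → ℝ)
    (ht : ∀ θ i, t θ i = (G θ - v (f θ) (θ i)) + h i (θ ∘ i.succAbove))
    (h' : (Fin k → Θ0) → ℝ)
    (hh' : ∀ x : Fin k → Θ0,
      h' x = (∑ π : Equiv.Perm (Fin k), ∑ j, h j (x ∘ π)) / (Nat.factorial (k + 1)))
    (t' : (Fin (k + 1) → Θ0) → Fin (k + 1) → ℝ)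
    (ht' : ∀ θ i, t' θ i = (G θ - v (f θ) (θ i)) + h' (θ ∘ i.succAbove)) :
    -- (i) feasibility transfers from h to h'
    ((∀ θ, ∑ i, t θ i ≤ 0) → ∀ θ, ∑ i, t' θ i ≤ 0) ∧
    -- (ii) if an anonymous mechanism h0 is welfare dominated by h,
    -- it is welfare dominated by h'
    (∀ h0 : (Fin k → Θ0) → ℝ,
      (∀ (x : Fin k → Θ0) (π : Equiv.Perm (Fin k)), h0 (x ∘ π) = h0 x) →
      ∀ t0 : (Fin (k + 1) → Θ0) → Fin (k + 1) → ℝ,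
        (∀ θ i, t0 θ i = (G θ - v (f θ) (θ i)) + h0 (θ ∘ i.succAbove)) →
        ((∀ θ, ∑ i, t0 θ i ≤ ∑ i, t θ i) ∧ (∃ θ, ∑ i, t0 θ i < ∑ i, t θ i)) →
        ((∀ θ, ∑ i, t0 θ i ≤ ∑ i, t' θ i) ∧
          (∃ θ, ∑ i, t0 θ i < ∑ i, t' θ i))) := by

  have Npos : (0:ℝ) < (Nat.factorial (k+1) : ℝ) := by
    exact_mod_cast Nat.factorial_pos (k+1)
  have hcard : (Finset.univ : Finset (Equiv.Perm (Fin (k+1)))).card = Nat.factorial (k+1) := by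
    simp [Fintype.card_perm]
  have sumEq : ∀ (g : Fin (k+1) → (Fin k → Θ0) → ℝ)
      (tt : (Fin (k+1) → Θ0) → Fin (k+1) → ℝ),
      (∀ θ i, tt θ i = (G θ - v (f θ) (θ i)) + g i (θ ∘ i.succAbove)) →
      ∀ θ, ∑ i : Fin (k+1), tt θ i = k * G θ + ∑ i : Fin (k+1), g i (θ ∘ i.succAbove) := by
    intro g tt htt θ
    calc ∑ i : Fin (k+1), tt θ i
        = ∑ i, ((G θ - v (f θ) (θ i)) + g i (θ ∘ i.succAbove)) := by
          exact Finset.sum_congr rfl fun i _ => htt θ i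
      _ = (∑ i : Fin (k+1), (G θ - v (f θ) (θ i))) + ∑ i : Fin (k+1), g i (θ ∘ i.succAbove) :=
          Finset.sum_add_distrib
      _ = k * G θ + ∑ i : Fin (k+1), g i (θ ∘ i.succAbove) := by
          congr 1
          rw [Finset.sum_sub_distrib, ← hG θ, Finset.sum_const, Finset.card_univ,
            Fintype.card_fin, nsmul_eq_mul]
          push_cast; ring
  have key : ∀ θ : Fin (k+1) → Θ0,
      ∑ i : Fin (k+1), h' (θ ∘ i.succAbove)
        = (∑ σ : Equiv.Perm (Fin (k+1)), ∑ j : Fin (k+1), h j ((θ ∘ σ) ∘ j.succAbove))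
            / (Nat.factorial (k+1)) := by
    intro θ
    have step : ∀ j : Fin (k+1),
        ∑ σ : Equiv.Perm (Fin (k+1)), h j ((θ ∘ σ) ∘ j.succAbove)
          = ∑ i : Fin (k+1), ∑ π : Equiv.Perm (Fin k), h j ((θ ∘ i.succAbove) ∘ π) :=
      fun j => sum_perm_remove (h j) θ j
    simp only [hh']
    rw [← Finset.sum_div]
    congr 1
    calc ∑ i : Fin (k+1), ∑ π : Equiv.Perm (Fin k), ∑ j : Fin (k+1), h j ((θ ∘ i.succAbove) ∘ π)
        = ∑ i : Fin (k+1), ∑ j, ∑ π : Equiv.Perm (Fin k), h j ((θ ∘ i.succAbove) ∘ π) :=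
          Finset.sum_congr rfl fun i _ => Finset.sum_comm
      _ = ∑ j, ∑ i : Fin (k+1), ∑ π : Equiv.Perm (Fin k), h j ((θ ∘ i.succAbove) ∘ π) :=
          Finset.sum_comm
      _ = ∑ j, ∑ σ : Equiv.Perm (Fin (k+1)), h j ((θ ∘ σ) ∘ j.succAbove) :=
          Finset.sum_congr rfl fun j _ => (step j).symm
      _ = ∑ σ : Equiv.Perm (Fin (k+1)), ∑ j : Fin (k+1), h j ((θ ∘ σ) ∘ j.succAbove) :=
          Finset.sum_comm
  constructor
  · -- (i)
    intro hfeas θ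
    have hb : ∀ σ : Equiv.Perm (Fin (k+1)),
        ∑ j : Fin (k+1), h j ((θ ∘ σ) ∘ j.succAbove) ≤ -(k * G θ) := by
      intro σ
      have hh := hfeas (θ ∘ σ)
      rw [sumEq h t ht (θ ∘ σ), hGinv θ σ] at hh
      linarith
    have hsum : (∑ σ : Equiv.Perm (Fin (k+1)), ∑ j : Fin (k+1), h j ((θ ∘ σ) ∘ j.succAbove))
        ≤ (Nat.factorial (k+1) : ℝ) * (-(k * G θ)) := by
      calc (∑ σ : Equiv.Perm (Fin (k+1)), ∑ j : Fin (k+1), h j ((θ ∘ σ) ∘ j.succAbove))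
          ≤ ∑ _σ : Equiv.Perm (Fin (k+1)), -(k * G θ) :=
            Finset.sum_le_sum fun σ _ => hb σ
        _ = (Nat.factorial (k+1) : ℝ) * (-(k * G θ)) := by
            rw [Finset.sum_const, hcard, nsmul_eq_mul]
    have hdiv : (∑ σ : Equiv.Perm (Fin (k+1)), ∑ j : Fin (k+1), h j ((θ ∘ σ) ∘ j.succAbove))
        / (Nat.factorial (k+1) : ℝ) ≤ -(k * G θ) := by
      rw [div_le_iff₀ Npos]; nlinarith
    have := sumEq (fun _ => h') t' ht' θ
    rw [this, key θ]
    linarith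
  · -- (ii)
    intro h0 hinv t0 ht0 ⟨hle, θs, hlt⟩
    have Ainv : ∀ (θ : Fin (k+1) → Θ0) (σ : Equiv.Perm (Fin (k+1))),
        ∑ i : Fin (k+1), h0 ((θ ∘ σ) ∘ i.succAbove) = ∑ i : Fin (k+1), h0 (θ ∘ i.succAbove) := by
      intro θ σ
      have e1 : ∀ i : Fin (k+1), h0 ((θ ∘ σ) ∘ i.succAbove) = h0 (θ ∘ (σ i).succAbove) := by
        intro i
        obtain ⟨τ, hτ⟩ := comp_succAbove_perm θ σ i
        rw [hτ, hinv]
      calc ∑ i : Fin (k+1), h0 ((θ ∘ σ) ∘ i.succAbove)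
          = ∑ i : Fin (k+1), h0 (θ ∘ (σ i).succAbove) := Finset.sum_congr rfl fun i _ => e1 i
        _ = ∑ i : Fin (k+1), h0 (θ ∘ i.succAbove) := Equiv.sum_comp σ fun i => h0 (θ ∘ i.succAbove)
    have hA : ∀ (θ : Fin (k+1) → Θ0) (σ : Equiv.Perm (Fin (k+1))),
        ∑ i : Fin (k+1), h0 (θ ∘ i.succAbove) ≤ ∑ j : Fin (k+1), h j ((θ ∘ σ) ∘ j.succAbove) := by
      intro θ σ
      have hh := hle (θ ∘ σ)
      rw [sumEq (fun _ => h0) t0 ht0 (θ ∘ σ), sumEq h t ht (θ ∘ σ)] at hh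
      have := Ainv θ σ
      linarith
    have hAt' : ∀ θ : Fin (k+1) → Θ0, ∑ i : Fin (k+1), t' θ i
        = k * G θ + (∑ σ : Equiv.Perm (Fin (k+1)), ∑ j : Fin (k+1), h j ((θ ∘ σ) ∘ j.succAbove))
            / (Nat.factorial (k+1)) := by
      intro θ
      rw [sumEq (fun _ => h') t' ht' θ, key θ]
    constructor
    · intro θ
      rw [sumEq (fun _ => h0) t0 ht0 θ, hAt' θ]
      have h1 : (Nat.factorial (k+1) : ℝ) * (∑ i : Fin (k+1), h0 (θ ∘ i.succAbove))
          ≤ ∑ σ : Equiv.Perm (Fin (k+1)), ∑ j : Fin (k+1), h j ((θ ∘ σ) ∘ j.succAbove) := by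
        calc (Nat.factorial (k+1) : ℝ) * (∑ i : Fin (k+1), h0 (θ ∘ i.succAbove))
            = ∑ _σ : Equiv.Perm (Fin (k+1)), ∑ i : Fin (k+1), h0 (θ ∘ i.succAbove) := by
              rw [Finset.sum_const, hcard, nsmul_eq_mul]
          _ ≤ _ := Finset.sum_le_sum fun σ _ => hA θ σ
      have h2 : (∑ i : Fin (k+1), h0 (θ ∘ i.succAbove))
          ≤ (∑ σ : Equiv.Perm (Fin (k+1)), ∑ j : Fin (k+1), h j ((θ ∘ σ) ∘ j.succAbove))
              / (Nat.factorial (k+1) : ℝ) := by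
        rw [le_div_iff₀ Npos]; nlinarith
      linarith
    · refine ⟨θs, ?_⟩
      rw [sumEq (fun _ => h0) t0 ht0 θs, hAt' θs]
      have hstrict : ∑ i : Fin (k+1), h0 (θs ∘ i.succAbove)
          < ∑ j : Fin (k+1), h j ((θs ∘ (1 : Equiv.Perm (Fin (k+1)))) ∘ j.succAbove) := by
        have hh := hlt
        rw [sumEq (fun _ => h0) t0 ht0 θs, sumEq h t ht θs] at hh
        have hone : (θs ∘ (1 : Equiv.Perm (Fin (k+1)))) = θs := by
          funext m; rfl
        rw [hone]
        linarith
      have h1 : (Nat.factorial (k+1) : ℝ) * (∑ i : Fin (k+1), h0 (θs ∘ i.succAbove))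
          < ∑ σ : Equiv.Perm (Fin (k+1)), ∑ j : Fin (k+1), h j ((θs ∘ σ) ∘ j.succAbove) := by
        calc (Nat.factorial (k+1) : ℝ) * (∑ i : Fin (k+1), h0 (θs ∘ i.succAbove))
            = ∑ _σ : Equiv.Perm (Fin (k+1)), ∑ i : Fin (k+1), h0 (θs ∘ i.succAbove) := by
              rw [Finset.sum_const, hcard, nsmul_eq_mul]
          _ < _ := Finset.sum_lt_sum (fun σ _ => hA θs σ)
              ⟨1, Finset.mem_univ 1, hstrict⟩
      have h2 : (∑ i : Fin (k+1), h0 (θs ∘ i.succAbove))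
          < (∑ σ : Equiv.Perm (Fin (k+1)), ∑ j : Fin (k+1), h j ((θs ∘ σ) ∘ j.succAbove))
              / (Nat.factorial (k+1) : ℝ) := by
        rw [lt_div_iff₀ Npos]; nlinarith
      linarith
end

section
/- In a multi-unit auction with m units and n unit-demand bidders with bids in [L,U], the Bailey-Cavallo mechanism (the OEL mechanism with index k = m+1), which charges each bidder their VCG payment minus (m/n) times the (m+1)-th highest bid among the other bidders, is feasible: its total payment Σ_i t_i^{OEL}(θ) ≤ 0 for all θ, with equality whenever [θ]_{m+1} = [θ]_{m+2}. -/
/-- For a sorted list, the head is ≤ any in-range entry. -/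
lemma head_le_getD {a : ℝ} {l : List ℝ} (h : (a :: l).Pairwise (· ≤ ·)) (j : ℕ)
    (hj : j < (a :: l).length) : a ≤ (a :: l).getD j 0 := by
  rw [List.getD_eq_getElem _ 0 hj]
  cases j with
  | zero => simp
  | succ k =>
    have hk : k < l.length := Nat.lt_of_succ_lt_succ hj
    have : (a :: l)[k+1] = l[k] := by simp
    rw [this]
    exact (List.pairwise_cons.mp h).1 _ (List.getElem_mem _)

/-- Entries of a sorted list dominate same-index entries of the ambient sorted list. -/
lemma sublist_getD_ge {l' l : List ℝ} (h : List.Sublist l' l) (hs : l.Pairwise (· ≤ ·)) :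
    ∀ j, j < l'.length → l.getD j 0 ≤ l'.getD j 0 := by
  induction h with
  | slnil => intro j hj; simp at hj
  | cons a h ih =>
    rename_i l' l
    intro j hj
    have hs' : l.Pairwise (· ≤ ·) := (List.pairwise_cons.mp hs).2
    cases j with
    | zero =>
      have h0 : (0:ℕ) < l'.length := hj
      rw [List.getD_eq_getElem l' 0 h0]
      have hmem : l'[0] ∈ l := h.mem (List.getElem_mem _)
      simpa using (List.pairwise_cons.mp hs).1 _ hmem
    | succ k =>
      have hsub' : l'.Pairwise (· ≤ ·) := hs'.sublist h
      have hk : k < l'.length := Nat.lt_of_succ_lt hj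
      have h1 : (a :: l).getD (k+1) 0 = l.getD k 0 := by simp
      rw [h1]
      calc l.getD k 0 ≤ l'.getD k 0 := ih hs' k hk
        _ ≤ l'.getD (k+1) 0 := by
            rw [List.getD_eq_getElem l' 0 hk, List.getD_eq_getElem l' 0 hj]
            exact List.pairwise_iff_getElem.mp hsub' k (k+1) hk hj (Nat.lt_succ_self k)
  | cons_cons a h ih =>
    rename_i l' l
    intro j hj
    have hs' : l.Pairwise (· ≤ ·) := (List.pairwise_cons.mp hs).2
    cases j with
    | zero => simp
    | succ k =>
      have hk : k < l'.length := Nat.lt_of_succ_lt_succ hj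
      simpa using ih hs' k hk

/-- Entries of a sorted sublist are bounded by shifted entries of the ambient list. -/
lemma sublist_getD_le {l' l : List ℝ} (h : List.Sublist l' l) (hs : l.Pairwise (· ≤ ·)) :
    ∀ j, j < l'.length → l'.getD j 0 ≤ l.getD (j + (l.length - l'.length)) 0 := by
  induction h with
  | slnil => intro j hj; simp at hj
  | cons a h ih =>
    rename_i l' l
    intro j hj
    have hs' : l.Pairwise (· ≤ ·) := (List.pairwise_cons.mp hs).2
    have hlen : l'.length ≤ l.length := h.length_le
    have harith : j + ((a :: l).length - l'.length) = (j + (l.length - l'.length)) + 1 := by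
      simp only [List.length_cons]; omega
    rw [harith]
    have h1 : (a :: l).getD (j + (l.length - l'.length) + 1) 0
        = l.getD (j + (l.length - l'.length)) 0 := by simp
    rw [h1]
    exact ih hs' j hj
  | cons_cons a h ih =>
    rename_i l' l
    intro j hj
    have hs' : l.Pairwise (· ≤ ·) := (List.pairwise_cons.mp hs).2
    have hlen : l'.length ≤ l.length := h.length_le
    have hdl : (a :: l).length - (a :: l').length = l.length - l'.length := by
      simp only [List.length_cons]; omega
    rw [hdl]
    cases j with
    | zero =>
      simp only [Nat.zero_add, List.getD_cons_zero]
      have hrange : l.length - l'.length < (a :: l).length := by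
        simp only [List.length_cons]; omega
      exact head_le_getD hs _ hrange
    | succ k =>
      have hk : k < l'.length := Nat.lt_of_succ_lt_succ hj
      have : k + 1 + (l.length - l'.length) = (k + (l.length - l'.length)) + 1 := by omega
      rw [this]
      simpa using ih hs' k hk

/-- Sorting commutes with erasing an element. -/
lemma sort_erase (s : Multiset ℝ) (a : ℝ) :
    (s.erase a).sort (· ≤ ·) = ((s.sort (· ≤ ·)).erase a) := by
  refine (fun hp h1 h2 => List.Perm.eq_of_pairwise' (r := (· ≤ ·)) h1 h2 hp) ?_ ?_ ?_
  · rw [← Multiset.coe_eq_coe]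
    rw [Multiset.sort_eq, ← Multiset.coe_erase, Multiset.sort_eq]
  · exact Multiset.pairwise_sort _ _
  · exact (Multiset.pairwise_sort s (· ≤ ·)).sublist (List.erase_sublist (a := a))




/-- The `k`-th highest element (1-indexed) of a multiset of reals. -/
noncomputable def kthHighest (m : Multiset ℝ) (k : ℕ) : ℝ :=
  (m.sort (· ≤ ·)).getD (Multiset.card m - k) 0

/-- The multiset of all bids. -/
def allBids {n : ℕ} (θ : Fin n → ℝ) : Multiset ℝ :=
  (Finset.univ.val : Multiset (Fin n)).map θ

/-- The multiset of bids of players other than `i`. -/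
def otherBids {n : ℕ} (θ : Fin n → ℝ) (i : Fin n) : Multiset ℝ :=
  ((Finset.univ.erase i).val : Multiset (Fin n)).map θ

/-- in a multi-unit auction with `m` units and `n` unit-demand
bidders with bids in `[L,U]` (`0 < m`, `m < n − 1`), the Bailey-Cavallo
mechanism `t i θ = t_i^{VCG}(θ) + (m/n)·[θ_{-i}]_{m+1}` — whose total payment
is `−m·[θ]_{m+1} + (m/n)·∑_i [θ_{-i}]_{m+1}` — is feasible: the total payment
is `≤ 0` for all `θ`, with equality whenever `[θ]_{m+1} = [θ]_{m+2}`. -/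
theorem bailey_cavallo_feasible
    {n m : ℕ} (hm0 : 0 < m) (hmn : m < n - 1) (L U : ℝ) (hLU : L ≤ U) :
    ∀ θ : Fin n → ℝ, (∀ i, θ i ∈ Set.Icc L U) →
      (-(m : ℝ) * kthHighest (allBids θ) (m + 1) +
          (m / n) * ∑ i, kthHighest (otherBids θ i) (m + 1) ≤ 0) ∧
      (kthHighest (allBids θ) (m + 1) = kthHighest (allBids θ) (m + 2) →
        -(m : ℝ) * kthHighest (allBids θ) (m + 1) +
          (m / n) * ∑ i, kthHighest (otherBids θ i) (m + 1) = 0) := by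
  intro θ _
  have hn : m + 2 ≤ n := by omega
  set s : Multiset ℝ := allBids θ with hs
  set l : List ℝ := s.sort (· ≤ ·) with hl
  have hcard : Multiset.card s = n := by
    simp [hs, allBids]
  have hlenl : l.length = n := by
    rw [hl, Multiset.length_sort, hcard]
  have hsort : l.Pairwise (· ≤ ·) := Multiset.pairwise_sort _ _
  have hother : ∀ i, otherBids θ i = s.erase (θ i) := by
    intro i
    have hi : i ∈ (Finset.univ.val : Multiset (Fin n)) := Finset.mem_univ_val i
    rw [otherBids, hs, allBids, Finset.erase_val]
    conv_rhs => rw [← Multiset.cons_erase hi, Multiset.map_cons, Multiset.erase_cons_head]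
  -- properties of erased lists
  have hmeml : ∀ i : Fin n, θ i ∈ l := by
    intro i
    rw [hl, Multiset.mem_sort, hs, allBids]
    exact Multiset.mem_map_of_mem θ (Finset.mem_univ_val i)
  have hlenE : ∀ i : Fin n, (l.erase (θ i)).length = n - 1 := by
    intro i
    rw [List.length_erase_of_mem (hmeml i), hlenl]
  set A : ℝ := l.getD (n - (m+1)) 0 with hA
  set B : ℝ := l.getD (n - (m+2)) 0 with hB
  have hAeq : kthHighest s (m+1) = A := by rw [kthHighest, ← hl, hcard]
  have hBeq : kthHighest s (m+2) = B := by rw [kthHighest, ← hl, hcard]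
  have hterm : ∀ i : Fin n,
      kthHighest (otherBids θ i) (m+1) = (l.erase (θ i)).getD (n - (m+2)) 0 := by
    intro i
    rw [hother i, kthHighest, Multiset.card_erase_of_mem, hcard, sort_erase, ← hl]
    · congr 1
      simp only [Nat.pred_eq_sub_one]
      omega
    · rw [hs, allBids]
      exact Multiset.mem_map_of_mem θ (Finset.mem_univ_val i)
  have hkey : ∀ i : Fin n, B ≤ kthHighest (otherBids θ i) (m+1) ∧
      kthHighest (otherBids θ i) (m+1) ≤ A := by
    intro i
    have hsub : List.Sublist (l.erase (θ i)) l := List.erase_sublist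
    have hj : n - (m+2) < (l.erase (θ i)).length := by rw [hlenE i]; omega
    constructor
    · rw [hterm i, hB]
      exact sublist_getD_ge hsub hsort _ hj
    · rw [hterm i, hA]
      have h2 := sublist_getD_le hsub hsort _ hj
      have hidx : n - (m+2) + (l.length - (l.erase (θ i)).length) = n - (m+1) := by
        rw [hlenl, hlenE i]; omega
      rwa [hidx] at h2
  have hn0 : (0:ℝ) < n := by
    have : 0 < n := by omega
    exact_mod_cast this
  have hm0' : (0:ℝ) ≤ m := by positivity
  have hsum_le : ∑ i, kthHighest (otherBids θ i) (m+1) ≤ n * A := by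
    calc ∑ i, kthHighest (otherBids θ i) (m+1) ≤ ∑ _i : Fin n, A :=
          Finset.sum_le_sum (fun i _ => (hkey i).2)
      _ = n * A := by
          rw [Finset.sum_const, Finset.card_univ, Fintype.card_fin, nsmul_eq_mul]
  constructor
  · rw [hAeq]
    have h1 : (↑m / ↑n) * ∑ i, kthHighest (otherBids θ i) (m+1)
        ≤ (↑m / ↑n) * (↑n * A) := by
      apply mul_le_mul_of_nonneg_left hsum_le
      positivity
    have h2 : (↑m / ↑n : ℝ) * (↑n * A) = ↑m * A := by
      field_simp
    linarith
  · intro hAB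
    rw [hAeq, hBeq] at hAB
    have hsum_eq : ∑ i, kthHighest (otherBids θ i) (m+1) = n * A := by
      have : ∀ i : Fin n, kthHighest (otherBids θ i) (m+1) = A := by
        intro i
        have h1 := (hkey i).1
        have h2 := (hkey i).2
        rw [← hAB] at h1
        linarith
      rw [Finset.sum_congr rfl (fun i _ => this i), Finset.sum_const,
        Finset.card_univ, Fintype.card_fin, nsmul_eq_mul]
    rw [hAeq, hsum_eq]
    field_simp
    ring
end

section
/- No feasible anonymous Groves mechanism welfare dominates an OEL mechanism with index k ∈ {1, ..., n−1}. Specifically, suppose an anonymous Groves mechanism t with t_i(θ) = t_i^{VCG}(θ) + h(θ_{-i}) is feasible, satisfies Σ_i t_i(θ) ≥ Σ_i t_i^{OEL}(θ) for every θ, where t^{OEL} is feasible and has total payment equal to 0 whenever [θ]_k = [θ]_{k+1}. Then h coincides with h^{OEL}, so t = t^{OEL}. -/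
open Classical in
private lemma sorted_getElem_filter {s : List ℝ} (hs : s.Pairwise (· ≤ ·))
    {idx : ℕ} (hidx : idx < s.length) {p : ℝ → Prop} [DecidablePred p]
    (hp : ∀ x y : ℝ, x ≤ y → p x → p y) :
    p s[idx] ↔ s.length - idx ≤ (s.filter p).length := by
  constructor
  · intro hpi
    have hmemtake : s[idx] ∈ s.take (idx+1) := by
      rw [← List.take_concat_get' s idx hidx]
      exact List.mem_append_right _ (List.mem_singleton_self _)
    have hdrop : ∀ x ∈ s.drop idx, p x := by
      intro x hx
      rw [List.drop_eq_getElem_cons hidx] at hx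
      rcases List.mem_cons.1 hx with rfl | hx
      · exact hpi
      · exact hp _ _ (hs.rel_of_mem_take_of_mem_drop hmemtake hx) hpi
    have heq : (s.drop idx).filter p = s.drop idx :=
      List.filter_eq_self.2 (fun x hx => decide_eq_true (hdrop x hx))
    have hle : ((s.drop idx).filter p).length ≤ (s.filter p).length := by
      conv_rhs => rw [← List.take_append_drop idx s]
      rw [List.filter_append, List.length_append]; omega
    rw [heq, List.length_drop] at hle
    exact hle
  · intro hlen
    by_contra hpi
    have hmemdrop : s[idx] ∈ s.drop idx := by
      rw [List.drop_eq_getElem_cons hidx]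
      exact List.mem_cons_self
    have htake : ∀ x ∈ s.take (idx+1), ¬ p x := by
      intro x hx hpx
      rw [← List.take_concat_get' s idx hidx] at hx
      rcases List.mem_append.1 hx with hx | hx
      · exact hpi (hp _ _ (hs.rel_of_mem_take_of_mem_drop hx hmemdrop) hpx)
      · simp at hx; subst hx; exact hpi hpx
    have h1 : (s.take (idx+1)).filter p = [] :=
      List.filter_eq_nil_iff.2 (fun x hx hpx => htake x hx (of_decide_eq_true hpx))
    have h2 : (s.filter p).length ≤ s.length - (idx+1) := by
      conv_lhs => rw [← List.take_append_drop (idx+1) s]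
      rw [List.filter_append, List.length_append, h1]
      have := List.length_filter_le p (s.drop (idx+1))
      simp only [List.length_drop] at this
      simpa using this
    omega
open Classical in
private lemma kthHighest_eq_getElem {M : Multiset ℝ} {j : ℕ} (hj1 : 1 ≤ j) (hj2 : j ≤ Multiset.card M) :
    ∀ (hidx : Multiset.card M - j < (M.sort (· ≤ ·)).length),
    kthHighest M j = (M.sort (· ≤ ·))[Multiset.card M - j] := by
  intro hidx
  unfold kthHighest
  exact List.getD_eq_getElem _ _ hidx

private lemma kthHighest_mem {M : Multiset ℝ} {j : ℕ} (hj1 : 1 ≤ j) (hj2 : j ≤ Multiset.card M) :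
    kthHighest M j ∈ M := by
  have hidx : Multiset.card M - j < (M.sort (· ≤ ·)).length := by
    rw [Multiset.length_sort]; omega
  rw [kthHighest_eq_getElem hj1 hj2 hidx]
  exact Multiset.mem_sort (· ≤ ·) |>.1 (List.getElem_mem hidx)

open Classical in
private lemma kthHighest_pred_iff {M : Multiset ℝ} {j : ℕ} (hj1 : 1 ≤ j) (hj2 : j ≤ Multiset.card M)
    {p : ℝ → Prop} [DecidablePred p] (hp : ∀ x y : ℝ, x ≤ y → p x → p y) :
    p (kthHighest M j) ↔ j ≤ Multiset.card (M.filter p) := by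
  have hlen : (M.sort (· ≤ ·)).length = Multiset.card M := Multiset.length_sort _
  have hidx : Multiset.card M - j < (M.sort (· ≤ ·)).length := by omega
  rw [kthHighest_eq_getElem hj1 hj2 hidx,
    sorted_getElem_filter (Multiset.pairwise_sort _ _) hidx hp]
  have hfc : Multiset.card (M.filter p) = ((M.sort (· ≤ ·)).filter p).length := by
    conv_lhs => rw [← Multiset.sort_eq M (· ≤ ·)]
    simp only [Multiset.filter_coe, Multiset.coe_card]
  omega

private lemma exists_theta {n : ℕ} (M : Multiset ℝ) (hM : Multiset.card M = n) :
    ∃ θ : Fin n → ℝ, allBids θ = M := by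
  obtain ⟨l, rfl⟩ := M.exists_rep
  have hl : l.length = n := hM
  subst hl
  refine ⟨fun i => l.get i, ?_⟩
  unfold allBids
  rw [Fin.univ_def]
  show Multiset.map l.get ↑(List.finRange l.length) = ↑l
  rw [Multiset.map_coe, List.map_get_finRange]

private lemma allBids_eq_cons {n : ℕ} (θ : Fin n → ℝ) (i : Fin n) :
    allBids θ = θ i ::ₘ otherBids θ i := by
  unfold allBids otherBids
  rw [Finset.erase_val, ← Multiset.map_cons,
    Multiset.cons_erase (Finset.mem_univ i : i ∈ (Finset.univ : Finset (Fin n)).val)]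

private lemma mem_allBids {n : ℕ} (θ : Fin n → ℝ) (i : Fin n) : θ i ∈ allBids θ :=
  Multiset.mem_map_of_mem θ (Finset.mem_univ i)

private lemma card_allBids {n : ℕ} (θ : Fin n → ℝ) : Multiset.card (allBids θ) = n := by
  unfold allBids; simp

private lemma card_otherBids {n : ℕ} (θ : Fin n → ℝ) (i : Fin n) :
    Multiset.card (otherBids θ i) = n - 1 := by
  unfold otherBids; simp [Finset.card_erase_of_mem]

open Classical in
private lemma otherBids_eq_erase {n : ℕ} (θ : Fin n → ℝ) (i : Fin n) :
    otherBids θ i = (allBids θ).erase (θ i) := by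
  rw [allBids_eq_cons θ i, Multiset.erase_cons_head]

open Classical in
private lemma sum_otherBids {n : ℕ} (θ : Fin n → ℝ) (g : Multiset ℝ → ℝ) :
    ∑ i : Fin n, g (otherBids θ i)
      = ((allBids θ).map (fun a => g ((allBids θ).erase a))).sum := by
  have : ∀ i : Fin n, g (otherBids θ i) = g ((allBids θ).erase (θ i)) := fun i => by
    rw [otherBids_eq_erase]
  simp_rw [this]
  rw [Finset.sum]
  show (Multiset.map (fun x => g ((allBids θ).erase (θ x))) Finset.univ.val).sum = _
  rw [show allBids θ = Multiset.map θ Finset.univ.val from rfl, Multiset.map_map]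
  rfl

private lemma kthHighest_eq_of_counts {T : Multiset ℝ} {a : ℝ} {j : ℕ}
    (hj1 : 1 ≤ j) (hj2 : j ≤ Multiset.card T)
    (hc1 : j ≤ Multiset.card (T.filter (fun x => a ≤ x)))
    (hc2 : Multiset.card (T.filter (fun x => a < x)) < j) :
    kthHighest T j = a := by
  classical
  have hge' : a ≤ kthHighest T j :=
    (kthHighest_pred_iff hj1 hj2 (fun x y hxy hax => le_trans hax hxy)).2 hc1
  have hle' : ¬ a < kthHighest T j := fun hc =>
    absurd ((kthHighest_pred_iff hj1 hj2 (fun x y hxy hax => lt_of_lt_of_le hax hxy)).1 hc)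
      (by omega)
  exact le_antisymm (not_lt.1 hle') hge'


/-- no feasible anonymous Groves mechanism welfare dominates an
OEL mechanism with index `k ∈ {1, ..., n−1}`.  Anonymous Groves mechanisms are
given by a function `h` of the multiset `θ_{-i}` of other bids, with total
payment `−m·[θ]_{m+1} + ∑_i h(θ_{-i})` (the total VCG payment being
`−m·[θ]_{m+1}`).  If the mechanism given by `h` is feasible and its total
payment is everywhere at least that of a feasible OEL mechanism `hOEL` with
index `k` (whose total payment vanishes whenever `[θ]_k = [θ]_{k+1}`), then
`h` coincides with `hOEL`, i.e. the two mechanisms are identical. -/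
theorem no_welfare_dominance_of_oel
    {n m k : ℕ} (hm0 : 0 < m) (hmn : m < n) (hk1 : 1 ≤ k) (hkn : k ≤ n - 1)
    (L U : ℝ) (hLU : L ≤ U)
    (h hOEL : Multiset ℝ → ℝ)
    -- feasibility of the mechanism given by h
    (hfeas : ∀ θ : Fin n → ℝ, (∀ i, θ i ∈ Set.Icc L U) →
      -(m : ℝ) * kthHighest (allBids θ) (m + 1) + ∑ i, h (otherBids θ i) ≤ 0)
    -- the OEL mechanism is feasible
    (hOELfeas : ∀ θ : Fin n → ℝ, (∀ i, θ i ∈ Set.Icc L U) →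
      -(m : ℝ) * kthHighest (allBids θ) (m + 1) + ∑ i, hOEL (otherBids θ i) ≤ 0)
    -- the total OEL payment is 0 whenever the k-th and (k+1)-th highest bids coincide
    (hOELzero : ∀ θ : Fin n → ℝ, (∀ i, θ i ∈ Set.Icc L U) →
      kthHighest (allBids θ) k = kthHighest (allBids θ) (k + 1) →
      -(m : ℝ) * kthHighest (allBids θ) (m + 1) + ∑ i, hOEL (otherBids θ i) = 0)
    -- h's total payment is everywhere at least the OEL total payment
    (hwelfare : ∀ θ : Fin n → ℝ, (∀ i, θ i ∈ Set.Icc L U) →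
      -(m : ℝ) * kthHighest (allBids θ) (m + 1) + ∑ i, hOEL (otherBids θ i) ≤
        -(m : ℝ) * kthHighest (allBids θ) (m + 1) + ∑ i, h (otherBids θ i)) :
    ∀ θ : Fin n → ℝ, (∀ i, θ i ∈ Set.Icc L U) → ∀ i : Fin n,
      h (otherBids θ i) = hOEL (otherBids θ i) := by
  classical
  have hn2 : 2 ≤ n := by omega
  set f : Multiset ℝ → ℝ := fun A => h A - hOEL A with hfdef
  have hsum_f : ∀ θ : Fin n → ℝ, (∀ i, θ i ∈ Set.Icc L U) →
      kthHighest (allBids θ) k = kthHighest (allBids θ) (k + 1) →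
      ((allBids θ).map (fun a => f ((allBids θ).erase a))).sum = 0 := by
    intro θ hb heq
    rw [← sum_otherBids]
    have h1 := hfeas θ hb
    have h2 := hOELzero θ hb heq
    have h3 := hwelfare θ hb
    have : ∑ i, f (otherBids θ i)
        = ∑ i, h (otherBids θ i) - ∑ i, hOEL (otherBids θ i) := by
      rw [hfdef, Finset.sum_sub_distrib]
    rw [this]; linarith
  have key : ∀ d : ℕ, ∀ A : Multiset ℝ, Multiset.card A = n - 1 →
      (∀ x ∈ A, x ∈ Set.Icc L U) →
      Multiset.card (A.filter (fun x => ¬ x = kthHighest A k)) = d → f A = 0 := by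
    intro d
    induction d using Nat.strong_induction_on with
    | _ d ih =>
    intro A hcard hbnd hd
    set a := kthHighest A k with ha
    have hkA : k ≤ Multiset.card A := by omega
    have haA : a ∈ A := kthHighest_mem hk1 hkA
    have haI : a ∈ Set.Icc L U := hbnd a haA
    have hge : k ≤ Multiset.card (A.filter (fun x => a ≤ x)) :=
      (kthHighest_pred_iff hk1 hkA (fun x y hxy hax => le_trans hax hxy)).1 (le_refl a)
    have hgt : Multiset.card (A.filter (fun x => a < x)) < k := by
      by_contra hcon
      push_neg at hcon
      exact lt_irrefl a
        ((kthHighest_pred_iff hk1 hkA (fun x y hxy hax => lt_of_lt_of_le hax hxy)).2 hcon)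
    set M := a ::ₘ A with hM
    have hcardM : Multiset.card M = n := by rw [hM, Multiset.card_cons, hcard]; omega
    obtain ⟨θ, hθ⟩ := exists_theta M hcardM
    have hbθ : ∀ i, θ i ∈ Set.Icc L U := by
      intro i
      have hmem : θ i ∈ M := hθ ▸ mem_allBids θ i
      rcases Multiset.mem_cons.1 hmem with h' | h'
      · rw [h']; exact haI
      · exact hbnd _ h'
    have hfiltM_ge : Multiset.card (M.filter (fun x => a ≤ x))
        = Multiset.card (A.filter (fun x => a ≤ x)) + 1 := by
      rw [hM, Multiset.filter_cons_of_pos _ (le_refl a), Multiset.card_cons]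
    have hfiltM_gt : Multiset.card (M.filter (fun x => a < x))
        = Multiset.card (A.filter (fun x => a < x)) := by
      rw [hM, Multiset.filter_cons_of_neg _ (lt_irrefl a)]
    have hMk : kthHighest M k = a :=
      kthHighest_eq_of_counts hk1 (by omega) (by omega) (by omega)
    have hMk1 : kthHighest M (k + 1) = a :=
      kthHighest_eq_of_counts (by omega) (by omega) (by omega) (by omega)
    have hzero := hsum_f θ hbθ (by rw [hθ, hMk, hMk1])
    rw [hθ, hM, Multiset.map_cons, Multiset.sum_cons, Multiset.erase_cons_head, ← hM] at hzero
    have hsplit : A.filter (fun x => x = a) + A.filter (fun x => ¬ x = a) = A :=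
      Multiset.filter_add_not _ A
    set c1 := Multiset.card (A.filter (fun x => x = a)) with hc1
    have hmap1 : ((A.filter (fun x => x = a)).map (fun x => f (M.erase x))).sum
        = (c1 : ℝ) * f A := by
      have hrep : (A.filter (fun x => x = a)).map (fun x => f (M.erase x))
          = Multiset.replicate c1 (f A) := by
        apply Multiset.eq_replicate.2
        refine ⟨by simp [hc1], ?_⟩
        intro b hb
        obtain ⟨x, hx, rfl⟩ := Multiset.mem_map.1 hb
        have hxa : x = a := (Multiset.mem_filter.1 hx).2
        rw [hxa, hM, Multiset.erase_cons_head]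
      rw [hrep, Multiset.sum_replicate, nsmul_eq_mul]
    have hmap2 : ((A.filter (fun x => ¬ x = a)).map (fun x => f (M.erase x))).sum = 0 := by
      apply Multiset.sum_eq_zero
      intro b hb
      obtain ⟨x, hx, rfl⟩ := Multiset.mem_map.1 hb
      obtain ⟨hxA, hxa⟩ := Multiset.mem_filter.1 hx
      have herase : M.erase x = a ::ₘ A.erase x := by
        rw [hM]; exact Multiset.erase_cons_tail A (fun hax => hxa hax.symm)
      set B := a ::ₘ A.erase x with hB
      have hcardAx : Multiset.card (A.erase x) = n - 2 := by
        rw [Multiset.card_erase_of_mem hxA, hcard, Nat.pred_eq_sub_one]; omega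
      have hcardB : Multiset.card B = n - 1 := by
        rw [hB, Multiset.card_cons, hcardAx]; omega
      have hbndB : ∀ y ∈ B, y ∈ Set.Icc L U := by
        intro y hy
        rcases Multiset.mem_cons.1 hy with h' | h'
        · rw [h']; exact haI
        · exact hbnd _ (Multiset.mem_of_mem_erase h')
      -- counts at B
      have hcge_le : Multiset.card (A.filter (fun x => a ≤ x))
          ≤ Multiset.card ((A.erase x).filter (fun x => a ≤ x)) + 1 := by
        conv_lhs => rw [← Multiset.cons_erase hxA]
        rw [Multiset.filter_cons]
        split_ifs <;> simp
      have hBge : k ≤ Multiset.card (B.filter (fun x => a ≤ x)) := by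
        rw [hB, Multiset.filter_cons_of_pos (p := fun x => a ≤ x) _ (le_refl a),
          Multiset.card_cons]
        exact le_trans hge hcge_le
      have hBgt : Multiset.card (B.filter (fun x => a < x)) < k := by
        rw [hB, Multiset.filter_cons_of_neg (p := fun x => a < x) _ (lt_irrefl a)]
        have hle : Multiset.card ((A.erase x).filter (fun x => a < x))
            ≤ Multiset.card (A.filter (fun x => a < x)) :=
          Multiset.card_le_card (Multiset.filter_le_filter _ (Multiset.erase_le x A))
        exact lt_of_le_of_lt hle hgt
      have hBk : kthHighest B k = a :=
        kthHighest_eq_of_counts hk1 (by omega) hBge hBgt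
      -- the measure decreases
      have hdA : Multiset.card (A.filter (fun x => ¬ x = a))
          = Multiset.card ((A.erase x).filter (fun x => ¬ x = a)) + 1 := by
        conv_lhs => rw [← Multiset.cons_erase hxA]
        rw [Multiset.filter_cons_of_pos (p := fun y => ¬ y = a) _ hxa, Multiset.card_cons]
      have hdB : Multiset.card (B.filter (fun y => ¬ y = kthHighest B k)) = d - 1 := by
        rw [hBk, hB, Multiset.filter_cons_of_neg (p := fun y => ¬ y = a) _ (fun hc => hc rfl)]
        omega
      rw [herase]
      exact ih (d - 1) (by omega) B hcardB hbndB hdB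
    have hsum_split : (Multiset.map (fun x => f (M.erase x)) A).sum = (c1 : ℝ) * f A := by
      conv_lhs => rw [← hsplit]
      rw [Multiset.map_add, Multiset.sum_add, hmap1, hmap2, add_zero]
    rw [hsum_split] at hzero
    have hfin : ((c1 : ℝ) + 1) * f A = 0 := by
      have hring : ((c1 : ℝ) + 1) * f A = f A + (c1 : ℝ) * f A := by ring
      rw [hring, hzero]
    have hpos : ((c1 : ℝ) + 1) ≠ 0 := by positivity
    exact (mul_eq_zero.1 hfin).resolve_left hpos
  intro θ hb i
  have hbndA : ∀ x ∈ otherBids θ i, x ∈ Set.Icc L U := by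
    intro x hx
    obtain ⟨j, _, rfl⟩ := Multiset.mem_map.1 hx
    exact hb j
  have hkey := key _ (otherBids θ i) (card_otherBids θ i) hbndA rfl
  have h0 : h (otherBids θ i) - hOEL (otherBids θ i) = 0 := hkey
  linarith
end

section
/- In the public project problem with equal participation costs, the Bailey-Cavallo mechanism coincides with the VCG mechanism: for every player i and every profile θ_{-i} of others' types, S_i^{BCGC}(θ_{-i}) := max_{θ'_i ∈ [0,c]} Σ_k t_k^{VCG}(θ'_i, θ_{-i}) = 0. -/
/-- Efficient decision in the public project problem with equal cost shares:
build (`1`) iff the sum of types covers the cost `c`. -/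
noncomputable def ppDecision {n : ℕ} (c : ℝ) (θ : Fin n → ℝ) : ℝ :=
  if c ≤ ∑ i, θ i then 1 else 0

/-- VCG (Clarke) tax of player `i` in the public project problem with equal
cost shares `c/n`: `∑_{j≠i} v_j(f(θ),θ_j) − max_{d∈{0,1}} ∑_{j≠i} v_j(d,θ_j)`
where `v_j(d,θ_j) = d(θ_j − c/n)`. -/
noncomputable def ppVCGtax {n : ℕ} (c : ℝ) (θ : Fin n → ℝ) (i : Fin n) : ℝ :=
  ppDecision c θ * (∑ j ∈ Finset.univ.erase i, (θ j - c / n)) -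
    max 0 (∑ j ∈ Finset.univ.erase i, (θ j - c / n))

/-- in the public project problem with equal participation
costs, the Bailey-Cavallo mechanism coincides with VCG: for every player `i`
and profile `θ` of types in `[0,c]`,
`S_i^{BCGC}(θ_{-i}) = max_{θ'_i ∈ [0,c]} ∑_k t_k^{VCG}(θ'_i, θ_{-i}) = 0`. -/
theorem public_project_bcgc_eq_vcg
    {n : ℕ} (hn : 2 ≤ n) (c : ℝ) (hc : 0 < c)
    (θ : Fin n → ℝ) (hθ : ∀ i, θ i ∈ Set.Icc 0 c) (i : Fin n) :
    IsGreatest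
      {x : ℝ | ∃ θi' ∈ Set.Icc 0 c,
        x = ∑ k, ppVCGtax c (Function.update θ i θi') k} 0 := by
  have hnpos : (0:ℝ) < n := by
    have : (2:ℝ) ≤ n := by exact_mod_cast hn
    linarith
  have hn0 : (n:ℝ) ≠ 0 := ne_of_gt hnpos
  have hcn : 0 < c / n := div_pos hc hnpos
  have hnc : (n:ℝ) * (c / n) = c := mul_div_cancel₀ c hn0
  set T := ∑ j ∈ Finset.univ.erase i, θ j with hTdef
  have hT0 : 0 ≤ T := Finset.sum_nonneg fun j _ => (hθ j).1
  -- sum of updated profile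
  have hS : ∀ v : ℝ, ∑ j, Function.update θ i v j = v + T := by
    intro v
    rw [Finset.sum_update_of_mem (Finset.mem_univ i), hTdef,
      ← Finset.sdiff_singleton_eq_erase]
  -- the "others" sums
  have hA : ∀ (v : ℝ) (k : Fin n),
      ∑ j ∈ Finset.univ.erase k, (Function.update θ i v j - c / n)
        = (v + T) - Function.update θ i v k + c / n - c := by
    intro v k
    rw [Finset.sum_erase_eq_sub (Finset.mem_univ k), Finset.sum_sub_distrib,
      Finset.sum_const, hS]
    simp only [Finset.card_univ, Fintype.card_fin, nsmul_eq_mul, hnc]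
    ring
  constructor
  · -- membership: exhibit θi' making the total zero
    by_cases hcase : T < c - c / n
    · refine ⟨0, ⟨le_refl 0, hc.le⟩, ?_⟩
      have hd : ppDecision c (Function.update θ i 0) = 0 := by
        rw [ppDecision, if_neg]
        rw [hS]
        push_neg
        linarith
      symm
      refine Finset.sum_eq_zero fun k _ => ?_
      rw [ppVCGtax, hd, hA, zero_mul, zero_sub, neg_eq_zero, max_eq_left]
      by_cases hk : k = i
      · subst hk; simp; linarith
      · rw [Function.update_of_ne hk]
        have := (hθ k).1
        linarith
    · push_neg at hcase
      refine ⟨c, ⟨hc.le, le_refl c⟩, ?_⟩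
      have hd : ppDecision c (Function.update θ i c) = 1 := by
        rw [ppDecision, if_pos]
        rw [hS]
        linarith
      symm
      refine Finset.sum_eq_zero fun k _ => ?_
      rw [ppVCGtax, hd, hA, one_mul, sub_eq_zero, max_eq_right]
      by_cases hk : k = i
      · subst hk; simp; linarith
      · rw [Function.update_of_ne hk]
        have := (hθ k).2
        linarith
  · -- upper bound: every total is ≤ 0
    rintro x ⟨v, hv, rfl⟩
    refine Finset.sum_nonpos fun k _ => ?_
    rw [ppVCGtax, ppDecision]
    split_ifs
    · have := le_max_right (0:ℝ)
        (∑ j ∈ Finset.univ.erase k, (Function.update θ i v j - c / n))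
      linarith
    · have := le_max_left (0:ℝ)
        (∑ j ∈ Finset.univ.erase k, (Function.update θ i v j - c / n))
      linarith
end

section
/- In the public project problem with equal participation costs, no feasible anonymous Groves mechanism welfare dominates the VCG mechanism: if h' : [0,c]^{n−1} → ℝ is permutation independent, the resulting Groves mechanism is feasible, and its total payment is at least that of VCG for every type vector, then h' equals the VCG function h on all of [0,c]^{n−1}. -/
open Finset


/-- The cycle permutation of `Fin k` sending `m ↦ m` for `m < j`,
`m ↦ m+1` for `j ≤ m < k-1`, and `k-1 ↦ j`. -/
def ppShiftCycle {k : ℕ} (j : Fin k) : Equiv.Perm (Fin k) where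
  toFun m := if m.val < j.val then m else if h : m.val + 1 = k then j
    else ⟨m.val + 1, by have := m.isLt; omega⟩
  invFun m := if m.val < j.val then m else if m.val = j.val then
    ⟨k - 1, by have := j.isLt; omega⟩ else ⟨m.val - 1, by have := m.isLt; omega⟩
  left_inv := by
    intro m
    have hj := j.isLt; have hm := m.isLt
    dsimp only
    by_cases h1 : m.val < j.val
    · rw [if_pos h1, if_pos h1]
    · rw [if_neg h1]
      by_cases h2 : m.val + 1 = k
      · rw [dif_pos h2, if_neg (lt_irrefl _), if_pos rfl]
        exact Fin.ext (by simp only [Fin.val_mk]; omega)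
      · rw [dif_neg h2, if_neg (by simp only [Fin.val_mk]; omega),
          if_neg (by simp only [Fin.val_mk]; omega)]
        exact Fin.ext (by simp only [Fin.val_mk]; omega)
  right_inv := by
    intro m
    have hj := j.isLt; have hm := m.isLt
    dsimp only
    by_cases h1 : m.val < j.val
    · rw [if_pos h1, if_pos h1]
    · rw [if_neg h1]
      by_cases h2 : m.val = j.val
      · rw [if_pos h2, if_neg (by simp only [Fin.val_mk]; omega), dif_pos (by simp only [Fin.val_mk]; omega)]
        exact Fin.ext (by omega)
      · rw [if_neg h2, if_neg (by simp only [Fin.val_mk]; omega),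
          dif_neg (by simp only [Fin.val_mk]; omega)]
        exact Fin.ext (by simp only [Fin.val_mk]; omega)

lemma ppRemoveNth_snoc_eq {k : ℕ} {α : Type*} [DecidableEq α] (x : Fin k → α) (a : α)
    (j : Fin k) :
    (Fin.snoc x a : Fin (k+1) → α) ∘ (Fin.castSucc j).succAbove
      = (Function.update x j a) ∘ (ppShiftCycle j) := by
  funext m
  have hj := j.isLt; have hm := m.isLt
  simp only [Function.comp_apply, ppShiftCycle, Equiv.coe_fn_mk]
  by_cases h1 : m.val < j.val
  · rw [Fin.succAbove_of_castSucc_lt _ _ (by rw [Fin.castSucc_lt_castSucc_iff, Fin.lt_def]; exact h1), Fin.snoc_castSucc,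
      if_pos h1, Function.update_of_ne (by intro h; rw [h] at h1; omega)]
  · rw [Fin.succAbove_of_le_castSucc _ _ (by simp only [Fin.le_def, Fin.coe_castSucc]; omega),
      if_neg h1]
    by_cases h2 : m.val + 1 = k
    · have hsucc : m.succ = Fin.last k := Fin.ext (by simp [h2])
      rw [dif_pos h2, hsucc, Fin.snoc_last, Function.update_self]
    · have hsucc : m.succ = Fin.castSucc ⟨m.val + 1, by omega⟩ := Fin.ext (by simp)
      rw [dif_neg h2, hsucc, Fin.snoc_castSucc,
        Function.update_of_ne (by intro h; have := congrArg Fin.val h; dsimp at this; omega)]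

/-- in the public project problem with `k + 1 ≥ 2` players and
equal participation costs, no feasible anonymous Groves mechanism welfare
dominates VCG: if `h' : [0,c]^k → ℝ` is permutation independent, the
resulting Groves mechanism (taxes `t' i θ = f(θ)·∑_{j≠i}(θ_j − c/n) + h'(θ_{-i})`)
is feasible, and its total payment is at least that of VCG at every type
vector, then `h'` coincides with the VCG function
`h(x) = −max{0, ∑_j (x_j − c/n)}` on all of `[0,c]^k`. -/
theorem public_project_no_anonymous_welfare_dominance
    {k : ℕ} (hk : 1 ≤ k) (c : ℝ) (hc : 0 < c)
    (h' : (Fin k → ℝ) → ℝ)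
    (hperm : ∀ (x : Fin k → ℝ) (π : Equiv.Perm (Fin k)), h' (x ∘ π) = h' x)
    (t' : (Fin (k + 1) → ℝ) → Fin (k + 1) → ℝ)
    (ht' : ∀ θ i, t' θ i =
      ppDecision c θ * (∑ j ∈ Finset.univ.erase i, (θ j - c / (k + 1))) +
        h' (θ ∘ i.succAbove))
    (hfeas : ∀ θ : Fin (k + 1) → ℝ, (∀ i, θ i ∈ Set.Icc 0 c) →
      ∑ i, t' θ i ≤ 0)
    (hwelfare : ∀ θ : Fin (k + 1) → ℝ, (∀ i, θ i ∈ Set.Icc 0 c) →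
      ∑ i, ppVCGtax c θ i ≤ ∑ i, t' θ i) :
    ∀ x : Fin k → ℝ, (∀ j, x j ∈ Set.Icc 0 c) →
      h' x = -max 0 (∑ j, (x j - c / (k + 1))) := by
  classical
  have hn1 : (0:ℝ) < (k:ℝ) + 1 := by positivity
  have hcn0 : 0 < c / ((k:ℝ) + 1) := by positivity
  have hcnc : c / ((k:ℝ) + 1) ≤ c := by
    rw [div_le_iff₀ hn1]; nlinarith [hc.le, Nat.cast_nonneg (α := ℝ) k]
  set g : (Fin k → ℝ) → ℝ := fun x => h' x + max 0 (∑ j, (x j - c / ((k:ℝ) + 1)))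
    with hgdef
  -- permutation invariance of g
  have hgperm : ∀ (x : Fin k → ℝ) (π : Equiv.Perm (Fin k)), g (x ∘ π) = g x := by
    intro x π
    simp only [hgdef]
    rw [hperm x π]
    congr 2
    simpa using Equiv.sum_comp π (fun j => x j - c / ((k:ℝ) + 1))
  -- sum over erased set vs succAbove
  have hE : ∀ (θ : Fin (k+1) → ℝ) (i : Fin (k+1)),
      ∑ j ∈ Finset.univ.erase i, (θ j - c / ((k:ℝ)+1))
        = ∑ m, (θ (i.succAbove m) - c / ((k:ℝ)+1)) := by
    intro θ i
    have h1 := Fin.sum_univ_succAbove (fun j => θ j - c / ((k:ℝ)+1)) i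
    have h2 := Finset.sum_erase_add Finset.univ (fun j => θ j - c / ((k:ℝ)+1))
      (Finset.mem_univ i)
    linarith
  -- the key relation at zero-VCG-surplus profiles
  have key : ∀ θ : Fin (k+1) → ℝ, (∀ i, θ i ∈ Set.Icc 0 c) →
      ppDecision c θ * (∑ i, ∑ j ∈ Finset.univ.erase i, (θ j - c / ((k:ℝ)+1)))
        = ∑ i, max 0 (∑ j ∈ Finset.univ.erase i, (θ j - c / ((k:ℝ)+1))) →
      ∑ i : Fin (k+1), g (θ ∘ i.succAbove) = 0 := by
    intro θ hθ hZ
    have hA := hwelfare θ hθ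
    have hB := hfeas θ hθ
    simp only [ht', ppVCGtax] at hA hB
    push_cast at hA hB
    rw [Finset.sum_add_distrib] at hB
    rw [Finset.sum_sub_distrib, Finset.sum_add_distrib] at hA
    rw [Finset.mul_sum] at hZ
    simp only [hgdef]
    rw [Finset.sum_add_distrib]
    have hmax : ∀ i : Fin (k+1),
        max 0 (∑ m, ((θ ∘ i.succAbove) m - c / ((k:ℝ)+1)))
          = max 0 (∑ j ∈ Finset.univ.erase i, (θ j - c / ((k:ℝ)+1))) := by
      intro i
      rw [hE θ i]
      rfl
    rw [Finset.sum_congr rfl (fun i _ => hmax i)]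
    linarith
  -- the two key relations
  have keyHigh : ∀ x : Fin k → ℝ, (∀ j, x j ∈ Set.Icc 0 c) →
      c - c / ((k:ℝ)+1) ≤ ∑ j, x j →
      g x + ∑ j, g (Function.update x j c) = 0 := by
    intro x hx hs
    set θ : Fin (k+1) → ℝ := Fin.snoc x c with hθdef
    have hθ : ∀ i, θ i ∈ Set.Icc 0 c := by
      intro i
      induction i using Fin.lastCases with
      | last => simp only [hθdef, Fin.snoc_last]; exact ⟨hc.le, le_refl c⟩
      | cast j => simpa only [hθdef, Fin.snoc_castSucc] using hx j
    have hsum : ∑ i, θ i = (∑ j, x j) + c := by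
      rw [Fin.sum_univ_castSucc]
      simp [hθdef]
    have hD : ppDecision c θ = 1 := by
      rw [ppDecision, if_pos]
      rw [hsum]
      nlinarith [hs, hcn0, hcnc]
    have huniv : ∑ j, (θ j - c / ((k:ℝ)+1)) = (∑ j, x j) + c - ((k:ℝ)+1) * (c / ((k:ℝ)+1)) := by
      rw [Finset.sum_sub_distrib, Finset.sum_const, Finset.card_univ, Fintype.card_fin,
        nsmul_eq_mul, hsum]
      push_cast
      ring
    have hcc : ((k:ℝ)+1) * (c / ((k:ℝ)+1)) = c := mul_div_cancel₀ c (ne_of_gt hn1)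
    have hEi : ∀ i : Fin (k+1), ∑ j ∈ Finset.univ.erase i, (θ j - c / ((k:ℝ)+1))
        = (∑ j, x j) + c / ((k:ℝ)+1) - θ i := by
      intro i
      have h2 := Finset.sum_erase_add Finset.univ (fun j => θ j - c / ((k:ℝ)+1))
        (Finset.mem_univ i)
      rw [huniv, hcc] at h2
      linarith [h2]
    have hEpos : ∀ i : Fin (k+1), 0 ≤ ∑ j ∈ Finset.univ.erase i, (θ j - c / ((k:ℝ)+1)) := by
      intro i
      rw [hEi i]
      have := (hθ i).2
      linarith
    have hZ : ppDecision c θ * (∑ i : Fin (k+1), ∑ j ∈ Finset.univ.erase i, (θ j - c / ((k:ℝ)+1)))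
        = ∑ i : Fin (k+1), max 0 (∑ j ∈ Finset.univ.erase i, (θ j - c / ((k:ℝ)+1))) := by
      rw [hD, one_mul]
      exact Finset.sum_congr rfl fun i _ => (max_eq_right (hEpos i)).symm
    have hkey := key θ hθ hZ
    rw [Fin.sum_univ_castSucc] at hkey
    have hlast : θ ∘ (Fin.last k).succAbove = x := by
      funext m
      simp [hθdef, Fin.succAbove_last]
    have hcst : ∀ j : Fin k, g (θ ∘ (Fin.castSucc j).succAbove) = g (Function.update x j c) := by
      intro j
      rw [hθdef, ppRemoveNth_snoc_eq x c j]
      exact hgperm _ _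
    rw [hlast, Finset.sum_congr rfl (fun j _ => hcst j)] at hkey
    linarith
  have keyLow : ∀ x : Fin k → ℝ, (∀ j, x j ∈ Set.Icc 0 c) →
      ∑ j, x j ≤ c - c / ((k:ℝ)+1) →
      g x + ∑ j, g (Function.update x j 0) = 0 := by
    intro x hx hs
    set θ : Fin (k+1) → ℝ := Fin.snoc x 0 with hθdef
    have hθ : ∀ i, θ i ∈ Set.Icc 0 c := by
      intro i
      induction i using Fin.lastCases with
      | last => simp only [hθdef, Fin.snoc_last]; exact ⟨le_refl 0, hc.le⟩
      | cast j => simpa only [hθdef, Fin.snoc_castSucc] using hx j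
    have hsum : ∑ i, θ i = ∑ j, x j := by
      rw [Fin.sum_univ_castSucc]
      simp [hθdef]
    have hD : ppDecision c θ = 0 := by
      rw [ppDecision, if_neg]
      rw [hsum]
      intro h
      nlinarith [hs, hcn0]
    have huniv : ∑ j, (θ j - c / ((k:ℝ)+1)) = (∑ j, x j) - ((k:ℝ)+1) * (c / ((k:ℝ)+1)) := by
      rw [Finset.sum_sub_distrib, Finset.sum_const, Finset.card_univ, Fintype.card_fin,
        nsmul_eq_mul, hsum]
      push_cast
      ring
    have hcc : ((k:ℝ)+1) * (c / ((k:ℝ)+1)) = c := mul_div_cancel₀ c (ne_of_gt hn1)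
    have hEi : ∀ i : Fin (k+1), ∑ j ∈ Finset.univ.erase i, (θ j - c / ((k:ℝ)+1))
        = (∑ j, x j) - c + c / ((k:ℝ)+1) - θ i := by
      intro i
      have h2 := Finset.sum_erase_add Finset.univ (fun j => θ j - c / ((k:ℝ)+1))
        (Finset.mem_univ i)
      rw [huniv, hcc] at h2
      linarith [h2]
    have hEneg : ∀ i : Fin (k+1), ∑ j ∈ Finset.univ.erase i, (θ j - c / ((k:ℝ)+1)) ≤ 0 := by
      intro i
      rw [hEi i]
      have := (hθ i).1
      linarith
    have hZ : ppDecision c θ * (∑ i : Fin (k+1), ∑ j ∈ Finset.univ.erase i, (θ j - c / ((k:ℝ)+1)))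
        = ∑ i : Fin (k+1), max 0 (∑ j ∈ Finset.univ.erase i, (θ j - c / ((k:ℝ)+1))) := by
      rw [hD, zero_mul]
      rw [Finset.sum_congr rfl fun i _ => (max_eq_left (hEneg i))]
      simp
    have hkey := key θ hθ hZ
    rw [Fin.sum_univ_castSucc] at hkey
    have hlast : θ ∘ (Fin.last k).succAbove = x := by
      funext m
      simp [hθdef, Fin.succAbove_last]
    have hcst : ∀ j : Fin k, g (θ ∘ (Fin.castSucc j).succAbove) = g (Function.update x j 0) := by
      intro j
      rw [hθdef, ppRemoveNth_snoc_eq x 0 j]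
      exact hgperm _ _
    rw [hlast, Finset.sum_congr rfl (fun j _ => hcst j)] at hkey
    linarith
  -- generic downward induction on the number of coordinates different from `a`
  have hgen : ∀ (a : ℝ) (Cond : (Fin k → ℝ) → Prop), a ∈ Set.Icc 0 c →
      (∀ x : Fin k → ℝ, (∀ j, x j ∈ Set.Icc 0 c) → Cond x →
        g x + ∑ j, g (Function.update x j a) = 0) →
      (∀ (x : Fin k → ℝ) (j : Fin k), (∀ j', x j' ∈ Set.Icc 0 c) → Cond x →
        Cond (Function.update x j a)) →
      ∀ (N : ℕ) (x : Fin k → ℝ),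
        (Finset.univ.filter (fun j => x j ≠ a)).card ≤ N →
        (∀ j, x j ∈ Set.Icc 0 c) → Cond x → g x = 0 := by
    intro a Cond ha hrel hclos N
    induction N with
    | zero =>
      intro x hcard hx hC
      have hfe : Finset.univ.filter (fun j => x j ≠ a) = ∅ :=
        Finset.card_eq_zero.mp (Nat.le_zero.mp hcard)
      have hxa : ∀ j, x j = a := by
        intro j
        by_contra h
        have : j ∈ Finset.univ.filter (fun j => x j ≠ a) := by
          simp [h]
        rw [hfe] at this
        exact absurd this (Finset.notMem_empty j)
      have hrelx := hrel x hx hC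
      have hupd : ∀ j : Fin k, Function.update x j a = x := by
        intro j
        rw [← hxa j]
        exact Function.update_eq_self j x
      rw [Finset.sum_congr rfl (fun j _ => by rw [hupd j]), Finset.sum_const,
        Finset.card_univ, Fintype.card_fin, nsmul_eq_mul] at hrelx
      have hfac : (1 + (k:ℝ)) * g x = 0 := by linarith
      rcases mul_eq_zero.mp hfac with h | h
      · exfalso
        have : (0:ℝ) < 1 + (k:ℝ) := by positivity
        linarith
      · exact h
    | succ N ih =>
      intro x hcard hx hC
      have hrelx := hrel x hx hC
      rw [← Finset.sum_filter_add_sum_filter_not Finset.univ (fun j => x j = a)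
        (fun j => g (Function.update x j a))] at hrelx
      have h1 : ∑ j ∈ Finset.univ.filter (fun j => x j = a), g (Function.update x j a)
          = ((Finset.univ.filter (fun j => x j = a)).card : ℝ) * g x := by
        rw [Finset.sum_congr rfl (fun j hj => by
          rw [← (Finset.mem_filter.mp hj).2, Function.update_eq_self]),
          Finset.sum_const, nsmul_eq_mul]
      have h2 : ∑ j ∈ Finset.univ.filter (fun j => ¬ x j = a), g (Function.update x j a) = 0 := by
        apply Finset.sum_eq_zero
        intro j hj
        have hja : x j ≠ a := (Finset.mem_filter.mp hj).2
        apply ih (Function.update x j a)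
        · have hflt : Finset.univ.filter (fun j' => Function.update x j a j' ≠ a)
              = (Finset.univ.filter (fun j' => x j' ≠ a)).erase j := by
            ext j'
            simp only [Finset.mem_filter, Finset.mem_erase, Finset.mem_univ, true_and]
            by_cases h : j' = j
            · subst h
              simp [Function.update_self]
            · rw [Function.update_of_ne h]
              tauto
          rw [hflt, Finset.card_erase_of_mem (by simp [hja])]
          omega
        · intro j'
          by_cases h : j' = j
          · subst h
            rw [Function.update_self]
            exact ha
          · rw [Function.update_of_ne h]
            exact hx j'
        · exact hclos x j hx hC
      rw [h1, h2] at hrelx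
      have hfac : (1 + ((Finset.univ.filter (fun j => x j = a)).card : ℝ)) * g x = 0 := by
        linarith
      rcases mul_eq_zero.mp hfac with h | h
      · exfalso
        have : (0:ℝ) < 1 + ((Finset.univ.filter (fun j => x j = a)).card : ℝ) := by positivity
        linarith
      · exact h
  -- put everything together
  intro x hx
  have hg0 : g x = 0 := by
    rcases le_total (∑ j, x j) (c - c / ((k:ℝ)+1)) with h | h
    · refine hgen 0 (fun y => ∑ j, y j ≤ c - c / ((k:ℝ)+1)) ⟨le_refl 0, hc.le⟩
        (fun y hy hCy => keyLow y hy hCy) ?_ _ x le_rfl hx h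
      intro y j hy hCy
      have hupd : ∑ j', Function.update y j 0 j' = (∑ j', y j') - y j + 0 := by
        rw [Finset.sum_update_of_mem (Finset.mem_univ j), Finset.sdiff_singleton_eq_erase,
          Finset.sum_erase_eq_sub (Finset.mem_univ j)]
        ring
      rw [hupd]
      have := (hy j).1
      linarith
    · refine hgen c (fun y => c - c / ((k:ℝ)+1) ≤ ∑ j, y j) ⟨hc.le, le_refl c⟩
        (fun y hy hCy => keyHigh y hy hCy) ?_ _ x le_rfl hx h
      intro y j hy hCy
      have hupd : ∑ j', Function.update y j c j' = (∑ j', y j') - y j + c := by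
        rw [Finset.sum_update_of_mem (Finset.mem_univ j), Finset.sdiff_singleton_eq_erase,
          Finset.sum_erase_eq_sub (Finset.mem_univ j)]
        ring
      rw [hupd]
      have := (hy j).2
      linarith
  simp only [hgdef] at hg0
  linarith
end

section
/- In the public project problem with equal participation costs, there exists no feasible Groves mechanism that welfare dominates the VCG mechanism; i.e., the VCG mechanism is welfare undominated. -/
namespace PPaux

/-- `(n-1)` equal cost shares, the critical threshold. -/
noncomputable def ppA (k : ℕ) (c : ℝ) : ℝ := k * (c / (k + 1))

/-- vertex of the box spanned by `θ` (on `T`) and `b` (off `T`). -/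
noncomputable def vtx {n : ℕ} (θ b : Fin n → ℝ) (T : Finset (Fin n)) (m : Fin n) : ℝ :=
  if m ∈ T then θ m else b m

variable {k : ℕ}

lemma erase_sum (c : ℝ) (θ : Fin (k+1) → ℝ) (i : Fin (k+1)) :
    ∑ j ∈ Finset.univ.erase i, (θ j - c / (k+1)) =
      (∑ j, θ j) - θ i - ppA k c := by
  simp only [ppA]
  rw [Finset.sum_sub_distrib, Finset.sum_erase_eq_sub (Finset.mem_univ i),
    Finset.sum_const, Finset.card_erase_of_mem (Finset.mem_univ i),
    Finset.card_univ, Fintype.card_fin, nsmul_eq_mul]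
  push_cast
  ring

lemma vcg_cast (c : ℝ) (θ : Fin (k+1) → ℝ) (i : Fin (k+1)) :
    ppVCGtax c θ i =
      ppDecision c θ * ((∑ j, θ j) - θ i - ppA k c) -
      max 0 ((∑ j, θ j) - θ i - ppA k c) := by
  have hc : ((k+1 : ℕ) : ℝ) = (k : ℝ) + 1 := by push_cast; ring
  rw [ppVCGtax, hc, erase_sum]

lemma ppA_nonneg (hc : 0 < c) : 0 ≤ ppA k c := by
  simp only [ppA]; positivity

lemma ppA_lt (hc : 0 < c) : ppA k c < c := by
  have hk1 : (0:ℝ) < (k:ℝ) + 1 := by positivity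
  simp only [ppA]
  rw [mul_div_assoc', div_lt_iff₀ hk1]
  nlinarith

lemma vcg_sum_low {c : ℝ} (hc : 0 < c) (θ : Fin (k+1) → ℝ) (h0 : ∀ i, 0 ≤ θ i)
    (hS : (∑ i, θ i) ≤ ppA k c) :
    ∑ i, ppVCGtax c θ i = 0 := by
  have hAc : ppA k c < c := ppA_lt hc
  have hd : ppDecision c θ = 0 := by
    rw [ppDecision, if_neg]
    push_neg
    linarith
  apply Finset.sum_eq_zero
  intro i _
  rw [vcg_cast, hd]
  have h1 : (∑ j, θ j) - θ i - ppA k c ≤ 0 := by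
    have := h0 i; linarith
  rw [max_eq_left h1]
  ring

lemma vcg_sum_high (hk : 1 ≤ k) (c : ℝ) (θ : Fin (k+1) → ℝ)
    (hS : ∀ i, ppA k c + θ i ≤ ∑ i, θ i) :
    ∑ i, ppVCGtax c θ i = 0 := by
  have hk1 : (0:ℝ) < (k:ℝ) + 1 := by positivity
  have hkpos : (0:ℝ) < (k:ℝ) := by exact_mod_cast Nat.pos_of_ne_zero (by omega)
  have hcS : c ≤ ∑ i, θ i := by
    have h2 : ∑ i : Fin (k+1), (ppA k c + θ i) ≤
        ∑ _i : Fin (k+1), (∑ j, θ j) := Finset.sum_le_sum (fun i _ => hS i)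
    rw [Finset.sum_add_distrib, Finset.sum_const, Finset.sum_const, Finset.card_univ,
      Fintype.card_fin, nsmul_eq_mul, nsmul_eq_mul] at h2
    have he : ((k+1 : ℕ) : ℝ) * ppA k c = k * c := by
      simp only [ppA]; push_cast; field_simp
    rw [he] at h2
    push_cast at h2
    nlinarith
  have hd : ppDecision c θ = 1 := by rw [ppDecision, if_pos hcS]
  apply Finset.sum_eq_zero
  intro i _
  rw [vcg_cast, hd]
  have h1 : 0 ≤ (∑ j, θ j) - θ i - ppA k c := by have := hS i; linarith
  rw [max_eq_right h1]
  ring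

lemma vtx_comp_erase (θ b : Fin (k+1) → ℝ) (T : Finset (Fin (k+1))) (i : Fin (k+1)) :
    vtx θ b T ∘ i.succAbove = vtx θ b (T.erase i) ∘ i.succAbove := by
  funext x
  simp only [Function.comp_apply, vtx, Finset.mem_erase]
  have : i.succAbove x ≠ i := Fin.succAbove_ne i x
  simp [this]

lemma alt_sum_zero {α : Type*} [Fintype α] [DecidableEq α] (i : α)
    (g : Finset α → ℝ) (hg : ∀ T, g T = g (T.erase i)) :
    ∑ T ∈ (Finset.univ : Finset α).powerset, (-1:ℝ)^T.card * g T = 0 := by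
  have h1 : (Finset.univ : Finset α) = insert i (Finset.univ.erase i) :=
    (Finset.insert_erase (Finset.mem_univ i)).symm
  rw [h1, Finset.sum_powerset_insert (Finset.notMem_erase i _), ← Finset.sum_add_distrib]
  apply Finset.sum_eq_zero
  intro T hT
  have hiT : i ∉ T := fun hmem =>
    Finset.notMem_erase i Finset.univ (Finset.mem_powerset.mp hT hmem)
  have e1 : g (insert i T) = g T := by
    rw [hg (insert i T), Finset.erase_insert hiT]
  rw [e1, Finset.card_insert_of_notMem hiT, pow_succ]
  ring

/-- the cube (inclusion-exclusion) identity. -/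
lemma cube (φ : Fin (k+1) → (Fin k → ℝ) → ℝ) (θ b : Fin (k+1) → ℝ) :
    ∑ T ∈ (Finset.univ : Finset (Fin (k+1))).powerset,
      (-1:ℝ)^T.card * (∑ i, φ i (vtx θ b T ∘ i.succAbove)) = 0 := by
  have e : ∀ T ∈ (Finset.univ : Finset (Fin (k+1))).powerset,
      (-1:ℝ)^T.card * (∑ i, φ i (vtx θ b T ∘ i.succAbove)) =
      ∑ i, (-1:ℝ)^T.card * φ i (vtx θ b T ∘ i.succAbove) := by
    intro T _; rw [Finset.mul_sum]
  rw [Finset.sum_congr rfl e, Finset.sum_comm]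
  apply Finset.sum_eq_zero
  intro i _
  exact alt_sum_zero i (fun T => φ i (vtx θ b T ∘ i.succAbove))
    (fun T => by show φ i (vtx θ b T ∘ i.succAbove) = φ i (vtx θ b (T.erase i) ∘ i.succAbove); rw [vtx_comp_erase θ b T i])

lemma succAbove_sum (θ : Fin (k+1) → ℝ) (i : Fin (k+1)) :
    (∑ x, (θ ∘ i.succAbove) x) = (∑ j, θ j) - θ i := by
  have := Fin.sum_univ_succAbove θ i
  simp only [Function.comp_apply]
  linarith

/-- the welfare-difference function of a Groves mechanism given by `h`,
relative to the VCG mechanism. -/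
noncomputable def ppD (c : ℝ) (h : Fin (k+1) → (Fin k → ℝ) → ℝ)
    (w : Fin (k+1) → ℝ) : ℝ :=
  ∑ i, (h i (w ∘ i.succAbove) + max 0 ((∑ x, (w ∘ i.succAbove) x) - ppA k c))

lemma cubeD (c : ℝ) (h : Fin (k+1) → (Fin k → ℝ) → ℝ) (θ b : Fin (k+1) → ℝ) :
    ∑ T ∈ (Finset.univ : Finset (Fin (k+1))).powerset,
      (-1:ℝ)^T.card * ppD c h (vtx θ b T) = 0 := by
  have := cube (fun i y => h i y + max 0 ((∑ x, y x) - ppA k c)) θ b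
  simpa [ppD] using this

end PPaux

/-- in the public project problem with `k + 1 ≥ 2` players and
equal participation costs, there exists no feasible Groves mechanism
(given by functions `h i` of `θ_{-i}`, with taxes
`t i θ = f(θ)·∑_{j≠i}(θ_j − c/n) + h i (θ_{-i})`) that welfare dominates the
VCG mechanism: the VCG mechanism is welfare undominated. -/
theorem public_project_vcg_welfare_undominated
    {k : ℕ} (hk : 1 ≤ k) (c : ℝ) (hc : 0 < c) :
    ¬ ∃ (h : Fin (k + 1) → (Fin k → ℝ) → ℝ)
        (t : (Fin (k + 1) → ℝ) → Fin (k + 1) → ℝ),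
      (∀ θ i, t θ i =
        ppDecision c θ * (∑ j ∈ Finset.univ.erase i, (θ j - c / (k + 1))) +
          h i (θ ∘ i.succAbove)) ∧
      (∀ θ : Fin (k + 1) → ℝ, (∀ i, θ i ∈ Set.Icc 0 c) → ∑ i, t θ i ≤ 0) ∧
      (∀ θ : Fin (k + 1) → ℝ, (∀ i, θ i ∈ Set.Icc 0 c) →
        ∑ i, ppVCGtax c θ i ≤ ∑ i, t θ i) ∧
      (∃ θ : Fin (k + 1) → ℝ, (∀ i, θ i ∈ Set.Icc 0 c) ∧
        ∑ i, ppVCGtax c θ i < ∑ i, t θ i) := by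
  rintro ⟨h, t, ht, hfeas, hdom, θh, hθbox, hθstrict⟩
  classical
  have hc0 : (0:ℝ) ≤ c := le_of_lt hc
  have hA0 : 0 ≤ PPaux.ppA k c := PPaux.ppA_nonneg hc
  have hAc : PPaux.ppA k c < c := PPaux.ppA_lt hc
  -- representation of the welfare difference
  have hDrepr : ∀ w : Fin (k+1) → ℝ,
      (∑ i, t w i) - (∑ i, ppVCGtax c w i) = PPaux.ppD c h w := by
    intro w
    rw [PPaux.ppD, ← Finset.sum_sub_distrib]
    apply Finset.sum_congr rfl
    intro i _
    rw [ht w i, PPaux.vcg_cast, PPaux.erase_sum, PPaux.succAbove_sum]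
    ring
  have hDge : ∀ w : Fin (k+1) → ℝ, (∀ i, w i ∈ Set.Icc 0 c) → 0 ≤ PPaux.ppD c h w := by
    intro w hw
    have := hdom w hw
    have h2 := hDrepr w
    linarith
  have hDzero : ∀ w : Fin (k+1) → ℝ, (∀ i, w i ∈ Set.Icc 0 c) →
      (∑ i, ppVCGtax c w i) = 0 → PPaux.ppD c h w = 0 := by
    intro w hw hv
    have h1 := hfeas w hw
    have h2 := hdom w hw
    have h3 := hDrepr w
    linarith
  have hZlow : ∀ w : Fin (k+1) → ℝ, (∀ i, w i ∈ Set.Icc 0 c) →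
      (∑ i, w i) ≤ PPaux.ppA k c → PPaux.ppD c h w = 0 := by
    intro w hw hs
    exact hDzero w hw (PPaux.vcg_sum_low hc w (fun i => (hw i).1) hs)
  have hZhigh : ∀ w : Fin (k+1) → ℝ, (∀ i, w i ∈ Set.Icc 0 c) →
      (∀ p, PPaux.ppA k c + w p ≤ ∑ i, w i) → PPaux.ppD c h w = 0 := by
    intro w hw hs
    exact hDzero w hw (PPaux.vcg_sum_high hk c w hs)
  -- a coordinate equal to `c`, away from `p`, pushes the sum above the threshold
  have htwo : ∀ w : Fin (k+1) → ℝ, (∀ i, w i ∈ Set.Icc 0 c) →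
      ∀ p q : Fin (k+1), q ≠ p → w q = c → PPaux.ppA k c + w p ≤ ∑ i, w i := by
    intro w hw p q hqp hqc
    have h1 : c ≤ ∑ m ∈ Finset.univ.erase p, w m := by
      rw [← hqc]
      exact Finset.single_le_sum (fun m _ => (hw m).1)
        (Finset.mem_erase.mpr ⟨hqp, Finset.mem_univ q⟩)
    have h2 : ∑ m ∈ Finset.univ.erase p, w m = (∑ i, w i) - w p :=
      Finset.sum_erase_eq_sub (Finset.mem_univ p)
    linarith
  -- CLAIM A
  have claimA : ∀ ψ : Fin (k+1) → ℝ, (∀ i, ψ i ∈ Set.Icc 0 c) → ∀ j : Fin (k+1),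
      ψ j = c → (∑ m ∈ Finset.univ.erase j, ψ m) ≤ PPaux.ppA k c →
      PPaux.ppD c h ψ = 0 := by
    intro ψ hψ j hjc hjs
    have hS'0 : 0 ≤ ∑ m ∈ Finset.univ.erase j, ψ m :=
      Finset.sum_nonneg (fun m _ => (hψ m).1)
    set β := PPaux.ppA k c - ∑ m ∈ Finset.univ.erase j, ψ m with hβ
    have hβ0 : 0 ≤ β := by simp only [hβ]; linarith
    have hβc : β ≤ c := by simp only [hβ]; linarith
    set b : Fin (k+1) → ℝ := fun m => if m = j then β else c with hb
    have hvbox : ∀ T, ∀ i, PPaux.vtx ψ b T i ∈ Set.Icc 0 c := by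
      intro T i
      simp only [PPaux.vtx, hb]
      split_ifs
      · exact hψ i
      · exact ⟨hβ0, hβc⟩
      · exact ⟨hc0, le_refl c⟩
    have hcube := PPaux.cubeD c h ψ b
    set M := Finset.univ.erase j with hM
    have hMcard : M.card = k := by
      simp [hM, Finset.card_erase_of_mem]
    set bad := M.powerset.filter (fun T => T.card = k - 1) with hbad
    have hgood : ∀ T ∈ (Finset.univ : Finset (Fin (k+1))).powerset,
        T ∉ insert Finset.univ bad → PPaux.ppD c h (PPaux.vtx ψ b T) = 0 := by
      intro T _ hTn
      rw [Finset.mem_insert] at hTn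
      push_neg at hTn
      obtain ⟨hTu, hTb⟩ := hTn
      by_cases hjT : j ∈ T
      · -- the coordinate j of the vertex equals c; pick another missing coordinate
        obtain ⟨m, hm⟩ : ∃ m, m ∉ T := by
          by_contra hcon; push_neg at hcon
          exact hTu (Finset.eq_univ_iff_forall.mpr hcon)
        have hmj : m ≠ j := fun e => hm (e ▸ hjT)
        have hwm : PPaux.vtx ψ b T m = c := by
          simp [PPaux.vtx, hm, hb, hmj]
        have hwj : PPaux.vtx ψ b T j = c := by
          simp [PPaux.vtx, hjT, hjc]
        apply hZhigh _ (hvbox T)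
        intro p
        by_cases hpm : p = m
        · exact htwo _ (hvbox T) p j (by rw [hpm]; exact fun e => hmj e.symm) hwj
        · exact htwo _ (hvbox T) p m (fun e => hpm e.symm) hwm
      · -- T ⊆ M
        have hTM : T ⊆ M := by
          intro x hx
          rw [hM, Finset.mem_erase]
          exact ⟨fun e => hjT (e ▸ hx), Finset.mem_univ x⟩
        by_cases hTMeq : T = M
        · -- the special vertex: total value exactly ppA
          apply hZlow _ (hvbox T)
          have hsum : ∑ i, PPaux.vtx ψ b T i
              = PPaux.vtx ψ b T j + ∑ m ∈ Finset.univ.erase j, PPaux.vtx ψ b T m :=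
            (Finset.add_sum_erase _ _ (Finset.mem_univ j)).symm
          have hvj : PPaux.vtx ψ b T j = β := by
            have : j ∉ T := hjT
            simp [PPaux.vtx, this, hb]
          have hrest : ∑ m ∈ Finset.univ.erase j, PPaux.vtx ψ b T m
              = ∑ m ∈ Finset.univ.erase j, ψ m := by
            apply Finset.sum_congr rfl
            intro m hm
            have : m ∈ T := by rw [hTMeq, hM]; exact hm
            simp [PPaux.vtx, this]
          rw [hsum, hrest, hvj]
          simp only [hβ]
          linarith
        · -- at least two missing coordinates in M, both equal to c
          have hcardne : T.card ≠ k - 1 := fun e =>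
            hTb (Finset.mem_filter.mpr ⟨Finset.mem_powerset.mpr hTM, e⟩)
          have hTlt : T.card < k := by
            have := Finset.card_lt_card (HasSubset.Subset.ssubset_of_ne hTM hTMeq)
            omega
          have h2le : 1 < (M \ T).card := by
            rw [Finset.card_sdiff_of_subset hTM, hMcard]
            omega
          obtain ⟨m1, hm1, m2, hm2, hne⟩ := Finset.one_lt_card.mp h2le
          have hm1M := Finset.mem_sdiff.mp hm1
          have hm2M := Finset.mem_sdiff.mp hm2
          have hm1j : m1 ≠ j := (Finset.mem_erase.mp (hM ▸ hm1M.1)).1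
          have hm2j : m2 ≠ j := (Finset.mem_erase.mp (hM ▸ hm2M.1)).1
          have hwm1 : PPaux.vtx ψ b T m1 = c := by
            simp [PPaux.vtx, hm1M.2, hb, hm1j]
          have hwm2 : PPaux.vtx ψ b T m2 = c := by
            simp [PPaux.vtx, hm2M.2, hb, hm2j]
          apply hZhigh _ (hvbox T)
          intro p
          by_cases hpm : p = m1
          · exact htwo _ (hvbox T) p m2 (by rw [hpm]; exact fun e => hne e.symm) hwm2
          · exact htwo _ (hvbox T) p m1 (fun e => hpm e.symm) hwm1
    -- accounting
    have hsub : insert Finset.univ bad ⊆ (Finset.univ : Finset (Fin (k+1))).powerset := by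
      intro T hT
      rcases Finset.mem_insert.mp hT with e | hTb
      · rw [e]; exact Finset.mem_powerset_self _
      · exact Finset.mem_powerset.mpr (Finset.subset_univ T)
    have huniv_bad : Finset.univ ∉ bad := by
      intro hu
      have h1 := Finset.mem_powerset.mp (Finset.mem_filter.mp hu).1
      exact (Finset.notMem_erase j Finset.univ) (hM ▸ h1 (Finset.mem_univ j))
    rw [← Finset.sum_subset hsub (fun T hT hTn => by
      rw [hgood T hT hTn, mul_zero])] at hcube
    rw [Finset.sum_insert huniv_bad] at hcube
    have hvu : PPaux.vtx ψ b Finset.univ = ψ := by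
      funext m; simp [PPaux.vtx]
    rw [hvu] at hcube
    have hcard_univ : (Finset.univ : Finset (Fin (k+1))).card = k + 1 := by simp
    have hsign : ∀ T ∈ bad, (-1:ℝ)^T.card * PPaux.ppD c h (PPaux.vtx ψ b T)
        = (-1:ℝ)^(k+1) * PPaux.ppD c h (PPaux.vtx ψ b T) := by
      intro T hTb
      have hcard : T.card = k - 1 := by
        have := (Finset.mem_filter.mp hTb).2
        simpa using this
      have hpow : (-1:ℝ)^(k+1) = (-1:ℝ)^(k-1) := by
        have hh : k - 1 + 2 = k + 1 := by omega
        rw [← hh, pow_add]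
        norm_num
      rw [hcard, hpow]
    rw [Finset.sum_congr rfl hsign, ← Finset.mul_sum, hcard_univ] at hcube
    have hfact : (-1:ℝ)^(k+1) *
        (PPaux.ppD c h ψ + ∑ T ∈ bad, PPaux.ppD c h (PPaux.vtx ψ b T)) = 0 := by
      rw [mul_add]; exact hcube
    have hpne : (-1:ℝ)^(k+1) ≠ 0 := pow_ne_zero _ (by norm_num)
    have hsum0 : PPaux.ppD c h ψ + ∑ T ∈ bad, PPaux.ppD c h (PPaux.vtx ψ b T) = 0 :=
      (mul_eq_zero.mp hfact).resolve_left hpne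
    have hnn : 0 ≤ ∑ T ∈ bad, PPaux.ppD c h (PPaux.vtx ψ b T) :=
      Finset.sum_nonneg (fun T _ => hDge _ (hvbox T))
    have := hDge ψ hψ
    linarith
  -- MAIN CLAIM
  have hmain : ∀ w : Fin (k+1) → ℝ, (∀ i, w i ∈ Set.Icc 0 c) → PPaux.ppD c h w = 0 := by
    intro w hw
    set b : Fin (k+1) → ℝ := fun m =>
      if PPaux.ppA k c ≤ ∑ p ∈ Finset.univ.erase m, w p then c else 0 with hb
    have hvbox : ∀ T, ∀ i, PPaux.vtx w b T i ∈ Set.Icc 0 c := by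
      intro T i
      simp only [PPaux.vtx, hb]
      split_ifs
      · exact hw i
      · exact ⟨hc0, le_refl c⟩
      · exact ⟨le_refl (0:ℝ), hc0⟩
    have hcube := PPaux.cubeD c h w b
    have hgood : ∀ T ∈ (Finset.univ : Finset (Fin (k+1))).powerset,
        T ≠ Finset.univ → PPaux.ppD c h (PPaux.vtx w b T) = 0 := by
      intro T _ hTu
      obtain ⟨l, hl⟩ : ∃ l, l ∉ T := by
        by_contra hcon; push_neg at hcon
        exact hTu (Finset.eq_univ_iff_forall.mpr hcon)
      by_cases hH : ∃ m, m ∉ T ∧ PPaux.ppA k c ≤ ∑ p ∈ Finset.univ.erase m, w p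
      · obtain ⟨m, hmT, hmA⟩ := hH
        have hwm : PPaux.vtx w b T m = c := by
          simp only [PPaux.vtx, hb]
          rw [if_neg hmT, if_pos hmA]
        by_cases hsum : ∑ p ∈ Finset.univ.erase m, (PPaux.vtx w b T) p ≤ PPaux.ppA k c
        · exact claimA _ (hvbox T) m hwm hsum
        · push_neg at hsum
          apply hZhigh _ (hvbox T)
          intro p
          by_cases hpm : p = m
          · have he : ∑ q ∈ Finset.univ.erase m, PPaux.vtx w b T q
                = (∑ i, PPaux.vtx w b T i) - PPaux.vtx w b T m :=
              Finset.sum_erase_eq_sub (Finset.mem_univ m)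
            rw [hpm]
            rw [he] at hsum
            linarith
          · exact htwo _ (hvbox T) p m (fun e => hpm e.symm) hwm
      · push_neg at hH
        apply hZlow _ (hvbox T)
        have hbz : ∀ m, m ∉ T → b m = 0 := by
          intro m hm
          simp only [hb]
          rw [if_neg (not_le.mpr (hH m hm))]
        have hTsub : T ⊆ Finset.univ.erase l := by
          intro x hx
          exact Finset.mem_erase.mpr ⟨fun e => hl (e ▸ hx), Finset.mem_univ x⟩
        have h1 : ∑ i, PPaux.vtx w b T i = ∑ m ∈ T, w m := by
          rw [← Finset.sum_subset (Finset.subset_univ T) (fun x _ hx => by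
            simp [PPaux.vtx, hx, hbz x hx])]
          apply Finset.sum_congr rfl
          intro m hm
          simp [PPaux.vtx, hm]
        have h2 : ∑ m ∈ T, w m ≤ ∑ m ∈ Finset.univ.erase l, w m :=
          Finset.sum_le_sum_of_subset_of_nonneg hTsub (fun m _ _ => (hw m).1)
        have h3 := hH l hl
        rw [h1]
        linarith
    rw [Finset.sum_eq_single_of_mem Finset.univ (Finset.mem_powerset_self _)
      (fun T hT hTu => by rw [hgood T hT hTu, mul_zero])] at hcube
    have hvu : PPaux.vtx w b Finset.univ = w := by
      funext m; simp [PPaux.vtx]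
    rw [hvu] at hcube
    have hpne : (-1:ℝ)^(Finset.univ : Finset (Fin (k+1))).card ≠ 0 :=
      pow_ne_zero _ (by norm_num)
    exact (mul_eq_zero.mp hcube).resolve_left hpne
  -- contradiction
  have h1 := hDrepr θh
  have h2 := hmain θh hθbox
  linarith
end

section
/- In the general public project problem (with possibly unequal cost shares c_1, ..., c_n summing to c), there is no pay-only Groves mechanism that dominates the VCG mechanism: if h' is a Groves mechanism with t'_i(θ) ≤ 0 for all i and θ, and t'_i(θ) ≥ t_i^{VCG}(θ) for all i and θ, then t' = t^{VCG}. -/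
/-- Efficient decision in the general public project problem with cost `c`. -/
noncomputable def gppDecision {n : ℕ} (c : ℝ) (θ : Fin n → ℝ) : ℝ :=
  if c ≤ ∑ i, θ i then 1 else 0

/-- VCG (Clarke) tax of player `i` in the general public project problem with
cost shares `cs`: `v_j(d,θ_j) = d(θ_j − cs_j)`. -/
noncomputable def gppVCGtax {n : ℕ} (c : ℝ) (cs : Fin n → ℝ)
    (θ : Fin n → ℝ) (i : Fin n) : ℝ :=
  gppDecision c θ * (∑ j ∈ Finset.univ.erase i, (θ j - cs j)) -
    max 0 (∑ j ∈ Finset.univ.erase i, (θ j - cs j))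

/-- in the general public project problem (`k + 1 ≥ 2` players,
cost shares `cs i > 0` summing to `c`), no pay-only Groves mechanism dominates
VCG: if the Groves mechanism given by `h` (taxes
`t' i θ = f(θ)·∑_{j≠i}(θ_j − cs_j) + h i (θ_{-i})`) satisfies `t' i θ ≤ 0` and
`t' i θ ≥ t_i^{VCG}(θ)` for all `i` and all `θ ∈ [0,c]^n`, then `t' = t^{VCG}`
on `[0,c]^n`. -/
theorem general_public_project_no_pay_only_dominance
    {k : ℕ} (hk : 1 ≤ k) (c : ℝ) (hc : 0 < c)
    (cs : Fin (k + 1) → ℝ) (hcs : ∀ i, 0 < cs i) (hsum : ∑ i, cs i = c)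
    (h : Fin (k + 1) → (Fin k → ℝ) → ℝ)
    (t' : (Fin (k + 1) → ℝ) → Fin (k + 1) → ℝ)
    (ht' : ∀ θ i, t' θ i =
      gppDecision c θ * (∑ j ∈ Finset.univ.erase i, (θ j - cs j)) +
        h i (θ ∘ i.succAbove))
    (hpayonly : ∀ θ : Fin (k + 1) → ℝ, (∀ i, θ i ∈ Set.Icc 0 c) →
      ∀ i, t' θ i ≤ 0)
    (hdom : ∀ θ : Fin (k + 1) → ℝ, (∀ i, θ i ∈ Set.Icc 0 c) →
      ∀ i, gppVCGtax c cs θ i ≤ t' θ i) :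
    ∀ θ : Fin (k + 1) → ℝ, (∀ i, θ i ∈ Set.Icc 0 c) →
      ∀ i, t' θ i = gppVCGtax c cs θ i := by
 
  intro θ hθ i
  set S : ℝ := ∑ j ∈ Finset.univ.erase i, (θ j - cs j) with hS
  set θ' := Function.update θ i (cs i) with hθ'def
  have hcsle : cs i ≤ c := by
    rw [← hsum]
    exact Finset.single_le_sum (fun j _ => (hcs j).le) (Finset.mem_univ i)
  have hmem : ∀ j, θ' j ∈ Set.Icc 0 c := by
    intro j
    by_cases hj : j = i
    · subst hj; simp only [hθ'def, Function.update_self]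
      exact ⟨(hcs j).le, hcsle⟩
    · simpa only [hθ'def, Function.update_of_ne hj] using hθ j
  have hSsame : ∑ j ∈ Finset.univ.erase i, (θ' j - cs j) = S := by
    refine Finset.sum_congr rfl fun j hj => ?_
    rw [hθ'def, Function.update_of_ne (Finset.ne_of_mem_erase hj)]
  have hsum' : ∑ j, θ' j = cs i + ∑ j ∈ Finset.univ.erase i, θ j := by
    rw [← Finset.add_sum_erase _ _ (Finset.mem_univ i)]
    congr 1
    · simp [hθ'def]
    · exact Finset.sum_congr rfl fun j hj =>
        by rw [hθ'def, Function.update_of_ne (Finset.ne_of_mem_erase hj)]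
  have hcond : (c ≤ ∑ j, θ' j) ↔ 0 ≤ S := by
    rw [hsum']
    have hcc : c = cs i + ∑ j ∈ Finset.univ.erase i, cs j := by
      rw [← hsum, Finset.add_sum_erase _ _ (Finset.mem_univ i)]
    rw [hcc, hS, Finset.sum_sub_distrib]
    constructor <;> intro <;> linarith
  have hdec : gppDecision c θ' * (∑ j ∈ Finset.univ.erase i, (θ' j - cs j)) = max 0 S := by
    unfold gppDecision
    rw [hSsame]
    by_cases h0 : 0 ≤ S
    · rw [if_pos (hcond.mpr h0), max_eq_right h0]; ring
    · rw [if_neg (fun hh => h0 (hcond.mp hh)), max_eq_left (le_of_not_ge h0)]; ring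
  have hvcg0 : gppVCGtax c cs θ' i = 0 := by
    unfold gppVCGtax
    rw [hSsame, ← hSsame, hdec, hSsame, sub_self]
  have hcomp : θ' ∘ i.succAbove = θ ∘ i.succAbove := by
    funext j
    simp only [Function.comp_apply, hθ'def,
      Function.update_of_ne (Fin.succAbove_ne i j)]
  have ht0 : t' θ' i = 0 :=
    le_antisymm (hpayonly θ' hmem i) (hvcg0 ▸ hdom θ' hmem i)
  have hh : h i (θ ∘ i.succAbove) = - max 0 S := by
    have hts := ht' θ' i
    rw [ht0, hcomp, hdec] at hts
    linarith
  rw [ht' θ i, hh, gppVCGtax, ← hS]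
  ring
end

section
/- For every n ≥ 3 there exists an instance of the general public project problem with n players (a cost c and cost shares c_1, ..., c_n > 0 summing to c) such that the Bailey-Cavallo mechanism dominates the VCG mechanism, i.e., for some player i and some profile θ_{-i}, S_i^{BCGC}(θ_{-i}) = max_{θ'_i} Σ_k t_k^{VCG}(θ'_i, θ_{-i}) < 0. -/
/-- for every `n ≥ 3` there is an instance of the general
public project problem with `n` players (a cost `c` and positive cost shares
summing to `c`) for which the Bailey-Cavallo mechanism dominates VCG: for
some player `i` and some profile `θ` of types in `[0,c]`,
`S_i^{BCGC}(θ_{-i}) = max_{θ'_i ∈ [0,c]} ∑_k t_k^{VCG}(θ'_i, θ_{-i})` is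
strictly negative. -/
theorem general_public_project_bc_dominates_vcg (n : ℕ) (hn : 3 ≤ n) :
    ∃ (c : ℝ) (cs : Fin n → ℝ), (∀ i, 0 < cs i) ∧ (∑ i, cs i = c) ∧
      ∃ (i : Fin n) (θ : Fin n → ℝ), (∀ j, θ j ∈ Set.Icc 0 c) ∧
        ∃ s : ℝ, s < 0 ∧
          IsGreatest
            {x : ℝ | ∃ θi' ∈ Set.Icc 0 c,
              x = ∑ k, gppVCGtax c cs (Function.update θ i θi') k} s := by
  have h0 : 0 < n := by omega
  have h1 : 1 < n := by omega
  have h2 : 2 < n := by omega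
  set i0 : Fin n := ⟨0, h0⟩ with hi0
  set i1 : Fin n := ⟨1, h1⟩ with hi1
  set i2 : Fin n := ⟨2, h2⟩ with hi2
  have h01 : i0 ≠ i1 := by simp [hi0, hi1, Fin.ext_iff]
  have h02 : i0 ≠ i2 := by simp [hi0, hi2, Fin.ext_iff]
  have h12 : i1 ≠ i2 := by simp [hi1, hi2, Fin.ext_iff]
  have hn3 : (3:ℝ) ≤ (n:ℝ) := by exact_mod_cast hn
  set ε : ℝ := (4*((n:ℝ)-1))⁻¹ with hεdef
  have hden : (0:ℝ) < 4*((n:ℝ)-1) := by nlinarith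
  have hεpos : 0 < ε := inv_pos.mpr hden
  have hε8 : ε ≤ 1/8 := by
    rw [hεdef, inv_le_comm₀ hden (by norm_num)]
    nlinarith
  set cs : Fin n → ℝ := fun j => ε + if j = i1 then 3/4 - ε else 0 with hcs
  set θ : Fin n → ℝ := fun j => (if j = i1 then (1/4:ℝ) else 0) +
    (if j = i2 then (1/2:ℝ) else 0) with hθ
  have hcs_sum : ∑ j, cs j = 1 := by
    rw [hcs]
    rw [Finset.sum_add_distrib, Finset.sum_const, Finset.sum_ite_eq' Finset.univ i1]
    simp only [Finset.mem_univ, if_true, Finset.card_univ, Fintype.card_fin, nsmul_eq_mul]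
    rw [hεdef]
    have hne : (4*((n:ℝ)-1)) ≠ 0 := ne_of_gt hden
    field_simp
    have hx : (-1 + (n:ℝ)) * (-1 + (n:ℝ))⁻¹ = 1 := mul_inv_cancel₀ (ne_of_gt (by linarith))
    linear_combination hx
  have hθ_sum : ∑ j, θ j = 3/4 := by
    rw [hθ]
    rw [Finset.sum_add_distrib, Finset.sum_ite_eq' Finset.univ i1,
      Finset.sum_ite_eq' Finset.univ i2]
    norm_num
  have hupd : ∀ t : ℝ, ∑ j, Function.update θ i0 t j = t + 3/4 := by
    intro t
    rw [Finset.sum_update_of_mem (Finset.mem_univ i0), ← Finset.erase_eq,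
      Finset.sum_erase_eq_sub (Finset.mem_univ i0), hθ_sum]
    have hz : θ i0 = 0 := by simp [hθ, h01, h02]
    rw [hz]; ring
  have hA : ∀ (t : ℝ) (k : Fin n),
      ∑ j ∈ Finset.univ.erase k, (Function.update θ i0 t j - cs j)
        = (t - 1/4) - (Function.update θ i0 t k - cs k) := by
    intro t k
    rw [Finset.sum_erase_eq_sub (Finset.mem_univ k), Finset.sum_sub_distrib,
      hupd, hcs_sum]
    ring
  have hcspos : ∀ j, 0 < cs j := by
    intro j; rw [hcs]; dsimp only; split <;> linarith
  have hθub : ∀ j, θ j ≤ 3/4 := by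
    intro j; rw [hθ]; dsimp only; split_ifs <;> norm_num
  have hθlb : ∀ j, 0 ≤ θ j := by
    intro j; rw [hθ]; dsimp only; split_ifs <;> norm_num
  have hcs0 : cs i0 = ε := by rw [hcs]; simp [h01]
  have hcs1 : cs i1 = 3/4 := by rw [hcs]; simp
  have hθ1 : θ i1 = 1/4 := by rw [hθ]; simp [h12]
  clear_value i0 i1 i2 ε cs θ
  refine ⟨1, cs, hcspos, hcs_sum, i0, θ, ?_, ε - 1/4, by linarith, ?_, ?_⟩
  · intro j
    exact ⟨hθlb j, le_trans (hθub j) (by norm_num)⟩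
  · -- membership: t = 1 attains ε - 1/4
    refine ⟨1, by constructor <;> norm_num, ?_⟩
    have hdec : gppDecision 1 (Function.update θ i0 1) = 1 := by
      rw [gppDecision, hupd]; norm_num
    have hzero : ∀ k, k ≠ i0 → gppVCGtax 1 cs (Function.update θ i0 1) k = 0 := by
      intro k hk
      rw [gppVCGtax, hdec, hA, Function.update_of_ne hk]
      have hint : 0 ≤ (1 - 1/4 : ℝ) - (θ k - cs k) := by
        have h3 := hθub k; have h4 := hcspos k; linarith
      rw [max_eq_right hint]; ring
    rw [Fintype.sum_eq_single i0 hzero, gppVCGtax, hdec, hA,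
      Function.update_self, hcs0]
    rw [max_eq_left (by linarith : (1 - 1/4 : ℝ) - (1 - ε) ≤ 0)]
    ring
  · -- upper bound
    rintro x ⟨t, ⟨ht0, ht1⟩, rfl⟩
    by_cases hd : (1:ℝ) ≤ t + 3/4
    · -- decision = 1
      have hdec : gppDecision 1 (Function.update θ i0 t) = 1 := by
        rw [gppDecision, hupd]; rw [if_pos hd]
      have htax0 : gppVCGtax 1 cs (Function.update θ i0 t) i0 = ε - 1/4 := by
        rw [gppVCGtax, hdec, hA, Function.update_self, hcs0]
        rw [max_eq_left (by linarith : (t - 1/4 : ℝ) - (t - ε) ≤ 0)]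
        ring
      have hle : ∀ k, gppVCGtax 1 cs (Function.update θ i0 t) k ≤ 0 := by
        intro k
        rw [gppVCGtax, hdec]
        have := le_max_right (0:ℝ) (∑ j ∈ Finset.univ.erase k,
          (Function.update θ i0 t j - cs j))
        linarith
      calc ∑ k, gppVCGtax 1 cs (Function.update θ i0 t) k
          = gppVCGtax 1 cs (Function.update θ i0 t) i0 +
            ∑ k ∈ Finset.univ.erase i0, gppVCGtax 1 cs (Function.update θ i0 t) k := by
            rw [Finset.add_sum_erase _ _ (Finset.mem_univ i0)]
        _ ≤ (ε - 1/4) + 0 := by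
            rw [htax0]
            exact add_le_add (le_refl _) (Finset.sum_nonpos fun k _ => hle k)
        _ = ε - 1/4 := by ring
    · -- decision = 0
      have hdec : gppDecision 1 (Function.update θ i0 t) = 0 := by
        rw [gppDecision, hupd]; rw [if_neg hd]
      have htax1 : gppVCGtax 1 cs (Function.update θ i0 t) i1 = -(t + 1/4) := by
        rw [gppVCGtax, hdec, hA, Function.update_of_ne h01.symm, hcs1, hθ1]
        rw [max_eq_right (by linarith : (0:ℝ) ≤ (t - 1/4) - (1/4 - 3/4))]
        ring
      have hle : ∀ k, gppVCGtax 1 cs (Function.update θ i0 t) k ≤ 0 := by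
        intro k
        rw [gppVCGtax, hdec]
        have := le_max_left (0:ℝ) (∑ j ∈ Finset.univ.erase k,
          (Function.update θ i0 t j - cs j))
        linarith
      calc ∑ k, gppVCGtax 1 cs (Function.update θ i0 t) k
          = gppVCGtax 1 cs (Function.update θ i0 t) i1 +
            ∑ k ∈ Finset.univ.erase i1, gppVCGtax 1 cs (Function.update θ i0 t) k := by
            rw [Finset.add_sum_erase _ _ (Finset.mem_univ i1)]
        _ ≤ -(t + 1/4) + 0 := by
            rw [htax1]
            exact add_le_add (le_refl _) (Finset.sum_nonpos fun k _ => hle k)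
        _ ≤ ε - 1/4 := by linarith
end

section
/- In the public project problem with equal participation costs, for any anonymous feasible Groves mechanism h' that welfare-weakly dominates VCG, the following holds at the all-c profile: h'(c, c, ..., c) = −(n−1)(c − c/n), i.e., h' agrees with the VCG function h at the profile where all n−1 other players report c. -/
/-- in the public project problem with `k + 1 ≥ 2` players and
equal participation costs, any anonymous feasible Groves mechanism `h'` whose
total payment weakly welfare-dominates VCG agrees with the VCG function at
the all-`c` profile: `h'(c,...,c) = −(n−1)(c − c/n)` where `n = k + 1`. -/
theorem public_project_anonymous_at_all_c
    {k : ℕ} (hk : 1 ≤ k) (c : ℝ) (hc : 0 < c)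
    (h' : (Fin k → ℝ) → ℝ)
    (hperm : ∀ (x : Fin k → ℝ) (π : Equiv.Perm (Fin k)), h' (x ∘ π) = h' x)
    (t' : (Fin (k + 1) → ℝ) → Fin (k + 1) → ℝ)
    (ht' : ∀ θ i, t' θ i =
      ppDecision c θ * (∑ j ∈ Finset.univ.erase i, (θ j - c / (k + 1))) +
        h' (θ ∘ i.succAbove))
    (hfeas : ∀ θ : Fin (k + 1) → ℝ, (∀ i, θ i ∈ Set.Icc 0 c) →
      ∑ i, t' θ i ≤ 0)
    (hwelfare : ∀ θ : Fin (k + 1) → ℝ, (∀ i, θ i ∈ Set.Icc 0 c) →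
      ∑ i, ppVCGtax c θ i ≤ ∑ i, t' θ i) :
    h' (fun _ => c) = -((k : ℝ)) * (c - c / (k + 1)) := by
  set θ : Fin (k+1) → ℝ := fun _ => c with hθdef
  have hθ : ∀ i, θ i ∈ Set.Icc 0 c := fun i => ⟨le_of_lt hc, le_refl c⟩
  have hsum : ∑ i, θ i = (k+1 : ℝ) * c := by
    simp [hθdef, Finset.sum_const, mul_comm]
  have hdec : ppDecision c θ = 1 := by
    unfold ppDecision
    rw [hsum, if_pos]
    nlinarith [Nat.cast_nonneg (α := ℝ) k]
  have hS : ∀ i : Fin (k+1), ∑ j ∈ Finset.univ.erase i, (θ j - c / (k+1))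
      = (k : ℝ) * (c - c / (k+1)) := by
    intro i
    simp only [hθdef]
    rw [Finset.sum_const, Finset.card_erase_of_mem (Finset.mem_univ i),
      Finset.card_univ, Fintype.card_fin, Nat.add_sub_cancel, nsmul_eq_mul]
  have hSpos : (0:ℝ) ≤ (k : ℝ) * (c - c / (k+1)) := by
    have h1 : c / (k+1) ≤ c := by
      apply div_le_self hc.le
      have := Nat.cast_nonneg (α := ℝ) k
      push_cast; linarith
    have : (0:ℝ) ≤ (k:ℝ) := Nat.cast_nonneg k
    nlinarith
  have hvcg : ∑ i, ppVCGtax c θ i = 0 := by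
    apply Finset.sum_eq_zero
    intro i _
    unfold ppVCGtax
    rw [hdec]
    push_cast
    rw [hS i, max_eq_right hSpos]
    push_cast
    ring
  have ht'sum : ∑ i, t' θ i
      = ((k:ℝ)+1) * ((k : ℝ) * (c - c / (k+1)) + h' (fun _ => c)) := by
    have : ∀ i : Fin (k+1), t' θ i
        = (k : ℝ) * (c - c / (k+1)) + h' (fun _ => c) := by
      intro i
      rw [ht' θ i, hdec, hS i, one_mul]
      congr 1
    rw [Finset.sum_congr rfl (fun i _ => this i), Finset.sum_const]
    simp [mul_comm]
    push_cast
    ring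
  have h1 := hfeas θ hθ
  have h2 := hwelfare θ hθ
  rw [ht'sum] at h1 h2
  rw [hvcg] at h2
  have hk1 : (0:ℝ) < (k:ℝ) + 1 := by positivity
  have : (k : ℝ) * (c - c / (k+1)) + h' (fun _ => c) = 0 := by
    nlinarith
  linarith
end
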